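/- Stable periodicity of 3-torus braid complexes (head): For all k ≥ 0 and all t ≥ −⌊4k/3⌋ there is an isomorphism of truncated complexes τ^{≥ −⌊4k/3⌋} M⟦(σ_1σ_2)^k⟧_Enh ≅ τ^{≥ −⌊4k/3⌋}(M⟦(σ_1σ_2)^{k+3}⟧_Enh {6}); equivalently there are chain-space isomorphisms ψ_t for t ≥ −⌊4k/3⌋ making the squares with the Morse differentials commute. -/

import Mathlib

/-!
STATEMENT 15: Stable periodicity of 3-torus braid complexes (head):
`τ^{≥ -⌊4k/3⌋} M⟦(σ₁σ₂)^k⟧_Enh ≅ τ^{≥ -⌊4k/3⌋} (M⟦(σ₁σ₂)^{k+3}⟧_Enh {6})`.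

Combinatorial presentation of the Morse complexes via discrete Morse theory: chain spaces
are indexed by the critical enhanced words in each homological degree, differentials are
the signed sums over directed paths of `G(⟦(σ₁σ₂)^k⟧_Enh, M)`. The cells and matrix
elements of the delooped Khovanov complexes are abstract data over an additive category,
constrained by the Bar-Natan cube structure: matrix elements supported on the
combinatorial edge relation `E3`, matched arrows invertible, and invariance of cells and
matrix elements under prepending six `1`-smoothed crossings (adding a full twist
`(σ₁σ₂)³`). Conclusion: for every homological degree `t ≥ -⌊4k/3⌋` there is a bijection of
the critical cells and isomorphisms `ψ` of the corresponding cells commuting (entrywise)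
with the Morse differentials; internal grading shifts differ by exactly `6`.
-/

namespace Stmt15

/-- The symbols: `zx = 0^x`, `z1 = 0^1`, `zm = 0^-`, `om = 1^-`. -/
inductive Sym : Type
  | zx | z1 | zm | om
  deriving DecidableEq

open Sym

/-- Words are functions `ℕ → Sym`; a word of length `n` is padded with `om` beyond `n`. -/
abbrev Word : Type := ℕ → Sym

/-- A symbol is a zero-smoothing. -/
def isZ (s : Sym) : Prop := s ≠ om

/-- An enhanced word of length `n` for the 3-strand torus braid (with `n = 2k` for
`(σ₁σ₂)^k`): padded by `om` beyond `n`, and a `0` carries superscript `x` or `1` iff it is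
followed by an odd number of `1`'s and then a `0` (so that a circle is split there); all
other letters carry `-`. -/
def Valid3 (n : ℕ) (w : Word) : Prop :=
  (∀ i, n ≤ i → w i = om) ∧
  ∀ i < n, ((w i = zx ∨ w i = z1) ↔
    (isZ (w i) ∧ ∃ j, i < j ∧ j < n ∧ isZ (w j) ∧
      (∀ l, i < l → l < j → w l = om) ∧ Odd (j - i - 1)))

/-- The prefix pattern `1…1 (0 0^x 1)^b` of total length `p = a + 3b`. -/
def Prefix3 (z : Word) (p : ℕ) : Prop :=
  ∃ a b, p = a + 3 * b ∧ (∀ i, i < a → z i = om) ∧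
    ∀ t, t < b → z (a + 3 * t) = zm ∧ z (a + 3 * t + 1) = zx ∧ z (a + 3 * t + 2) = om

/-- The three matching patterns of the Morse matching for 3-torus braids, at position `p`
(after a prefix `1…1 (0 0^x 1)^*`):
`0^1 1 0^s ↗ 0^s 1 1`, `0 0^1 1 0^s ↗ 0 0^s 1 1`, and `0 0 0^s ↗ 0^x 1 0^s`. -/
def Mpat3 (n : ℕ) (z x : Word) : Prop :=
  ∃ p, Prefix3 z p ∧
    ( -- pattern (a): `z = … 0^1 1 0^s y`, `x = … 0^s 1 1 y`
      (p + 2 < n ∧ z p = z1 ∧ z (p + 1) = om ∧ isZ (z (p + 2)) ∧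
        x p = z (p + 2) ∧ x (p + 1) = om ∧ x (p + 2) = om ∧
        (∀ i, i ≠ p → i ≠ p + 1 → i ≠ p + 2 → x i = z i)) ∨
      -- pattern (b): `z = … 0 0^1 1 0^s y`, `x = … 0 0^s 1 1 y`
      (p + 3 < n ∧ z p = zm ∧ z (p + 1) = z1 ∧ z (p + 2) = om ∧ isZ (z (p + 3)) ∧
        x (p + 1) = z (p + 3) ∧ x (p + 2) = om ∧ x (p + 3) = om ∧
        (∀ i, i ≠ p + 1 → i ≠ p + 2 → i ≠ p + 3 → x i = z i)) ∨
      -- pattern (c): `z = … 0 0 0^s y`, `x = … 0^x 1 0^s y`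
      (p + 2 < n ∧ z p = zm ∧ z (p + 1) = zm ∧ isZ (z (p + 2)) ∧
        x p = zx ∧ x (p + 1) = om ∧
        (∀ i, i ≠ p → i ≠ p + 1 → x i = z i)))

/-- The Morse matching `M` on enhanced words of `(σ₁σ₂)^k` (with `n = 2k`). -/
def MM3 (n : ℕ) (z x : Word) : Prop := Valid3 n z ∧ Valid3 n x ∧ Mpat3 n z x

/-- A critical (unmatched) cell. -/
def Critical3 (n : ℕ) (w : Word) : Prop :=
  Valid3 n w ∧ (∀ x, ¬ MM3 n w x) ∧ (∀ z, ¬ MM3 n z w)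

/-- The homological degree of an enhanced word: (number of ones) − n. -/
def hdeg3 (n : ℕ) (w : Word) : ℤ :=
  (((Finset.range n).filter fun i => w i = om).card : ℤ) - n


/-- The nonzero matrix elements of the delooped Khovanov cube of `(σ₁σ₂)^k` (with
`n = 2k`) between enhanced words: `b` is obtained from `a` by changing one `0` (at index
`q`) into a `1`; circles of a smoothing occur between consecutive zeros separated by an
odd number of ones, and the matrix element is nonzero precisely in the following cases
(merges following the Frobenius rules `x·x = 0`, `x·1 = x`, `1·1 = 1`; a merge of a
labelled circle into the through-strands is the identity or a dotted identity; a split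
creates a circle labelled `x` (identity cobordism) or `1` (dotted cobordism)). -/
def E3 (n : ℕ) (a b : Word) : Prop :=
  Valid3 n a ∧ Valid3 n b ∧ ∃ q, q < n ∧ isZ (a q) ∧ b q = om ∧
    ( -- `q` is the first zero: either the circle `(q, next)` (if any) merges into the
      -- through-strands, or nothing happens to the circles; labels are unchanged
      ((∀ i, i < q → a i = om) ∧ (∀ i, i ≠ q → b i = a i)) ∨
      -- `q` has a previous zero `p`:
      (∃ p, p < q ∧ isZ (a p) ∧ (∀ i, p < i → i < q → a i = om) ∧
        ( -- no zero after `q`: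
          ((∀ i, q < i → a i = om) ∧
            ( -- circle `(p, q)` merges into the through-strands
              (Odd (q - p - 1) ∧ b p = zm ∧ (∀ i, i ≠ p → i ≠ q → b i = a i)) ∨
              -- no circle at `(p, q)`: labels unchanged
              (¬ Odd (q - p - 1) ∧ (∀ i, i ≠ q → b i = a i)))) ∨
          -- next zero at `j`:
          (∃ j, q < j ∧ j < n ∧ isZ (a j) ∧ (∀ i, q < i → i < j → a i = om) ∧
            ( -- both circles `(p, q)` and `(q, j)` exist: they merge, labels multiply
              (Odd (q - p - 1) ∧ Odd (j - q - 1) ∧ ¬(a p = zx ∧ a q = zx) ∧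
                ((a p = z1 ∧ a q = z1 ∧ b p = z1) ∨
                  (¬(a p = z1 ∧ a q = z1) ∧ b p = zx)) ∧
                (∀ i, i ≠ p → i ≠ q → b i = a i)) ∨
              -- only `(p, q)` is a circle: it merges into the through-strands
              (Odd (q - p - 1) ∧ ¬ Odd (j - q - 1) ∧ b p = zm ∧
                (∀ i, i ≠ p → i ≠ q → b i = a i)) ∨
              -- only `(q, j)` is a circle: it merges into the through-strands
              (¬ Odd (q - p - 1) ∧ Odd (j - q - 1) ∧ (∀ i, i ≠ q → b i = a i)) ∨
              -- no circle at `(p, q)` nor `(q, j)`: a circle `(p, j)` is split off,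
              -- labelled `x` or `1`
              (¬ Odd (q - p - 1) ∧ ¬ Odd (j - q - 1) ∧ (b p = zx ∨ b p = z1) ∧
                (∀ i, i ≠ p → i ≠ q → b i = a i)))))))

/-- Directed paths in `G(⟦(σ₁σ₂)^k⟧_Enh, M)`. -/
inductive GPath3 (n : ℕ) : Word → Word → Type
  | nil (a : Word) : GPath3 n a a
  | up {a b c : Word} (e : E3 n a b) (hne : ¬ MM3 n a b) (p : GPath3 n b c) : GPath3 n a c
  | down {a b c : Word} (e : MM3 n b a) (p : GPath3 n b c) : GPath3 n a c

/-- The number of reversed (matched) edges in a path. -/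
def downs3 {n : ℕ} : ∀ {a b : Word}, GPath3 n a b → ℕ
  | _, _, .nil _ => 0
  | _, _, .up _ _ p => downs3 p
  | _, _, .down _ p => downs3 p + 1

/-- The internal grading shift of the (delooped) cell of an enhanced word. -/
def qsh3 (n : ℕ) (w : Word) : ℤ :=
  (((Finset.range n).filter fun i => w i = om).card : ℤ) - 2 * n
    + (((Finset.range n).filter fun i => w i = z1).card : ℤ)
    - (((Finset.range n).filter fun i => w i = zx).card : ℤ)

/-- The critical cells of homological degree `t`. -/
def Crit3T (n : ℕ) (t : ℤ) : Type :=
  {w : Word // Critical3 n w ∧ hdeg3 n w = t}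

section Cat

open CategoryTheory

universe v u

variable {𝒞 : Type u} [Category.{v} 𝒞] [Preadditive 𝒞]

/-- The value of the remembering functor on a path. -/
def pathHom3 (cell : Word → 𝒞) (dv : ∀ a b : Word, (cell a ⟶ cell b))
    (gv : ∀ a b : Word, (cell b ⟶ cell a)) (n : ℕ) :
    ∀ {a b : Word}, GPath3 n a b → (cell a ⟶ cell b)
  | _, _, .nil a => 𝟙 (cell a)
  | _, _, .up (a := a) (b := b) _ _ p => dv a b ≫ pathHom3 cell dv gv n p
  | _, _, .down (a := a) (b := b) _ p => gv b a ≫ pathHom3 cell dv gv n p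

/-- A matrix element of the Morse differential. -/
noncomputable def mEntry3 (cell : Word → 𝒞) (dv : ∀ a b : Word, (cell a ⟶ cell b))
    (gv : ∀ a b : Word, (cell b ⟶ cell a)) (n : ℕ) (z x : Word) : (cell z ⟶ cell x) :=
  ∑ᶠ p : GPath3 n z x, ((-1 : ℤ) ^ downs3 p) • pathHom3 cell dv gv n p

end Cat


/-- Prepending six `1`-smoothed crossings (a full twist `(σ₁σ₂)³`) to an enhanced word. -/
def prep6 (w : Word) : Word := fun i => if i < 6 then om else w (i - 6)

section Aux

open Sym

/-- Dropping the first six letters of a word. -/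
def shift6 (w : Word) : Word := fun i => w (i + 6)

/-- The first six letters are `om`. -/
def Ok (w : Word) : Prop := ∀ i < 6, w i = om

theorem prep6_lt {w : Word} {i : ℕ} (h : i < 6) : prep6 w i = om := if_pos h

theorem prep6_ge {w : Word} {i : ℕ} (h : 6 ≤ i) : prep6 w i = w (i - 6) :=
  if_neg (by omega)

theorem prep6_add (w : Word) (i : ℕ) : prep6 w (i + 6) = w i := by
  rw [prep6_ge (by omega), Nat.add_sub_cancel]

theorem shift6_prep6 (w : Word) : shift6 (prep6 w) = w :=
  funext fun i => prep6_add w i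

theorem ok_prep6 (w : Word) : Ok (prep6 w) := fun _ h => prep6_lt h

theorem prep6_shift6 {w : Word} (h : Ok w) : prep6 (shift6 w) = w := by
  funext i
  by_cases hi : i < 6
  · rw [prep6_lt hi, h i hi]
  · rw [prep6_ge (by omega)]; show w (i - 6 + 6) = w i; congr 1; omega

theorem prep6_inj : Function.Injective prep6 := fun a b h => by
  rw [← shift6_prep6 a, h, shift6_prep6]

/-! ### Transfer of `Valid3` -/

theorem prep6_idx (w : Word) {i j : ℕ} (h : i = j + 6) : prep6 w i = w j := by
  subst h; exact prep6_add w j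

theorem shift6_idx (w : Word) {i j : ℕ} (h : j = i + 6) : shift6 w i = w j := by
  subst h; rfl

theorem valid_prep6 {n : ℕ} {w : Word} (h : Valid3 n w) : Valid3 (n + 6) (prep6 w) := by
  obtain ⟨h1, h2⟩ := h
  constructor
  · intro i hi
    rw [prep6_ge (by omega)]; exact h1 _ (by omega)
  · intro i hi
    by_cases h6 : i < 6
    · rw [prep6_lt h6]
      simp [isZ]
    · rw [prep6_ge (show 6 ≤ i by omega)]
      rw [h2 (i - 6) (by omega)]
      constructor
      · rintro ⟨hz, j, hij, hjn, hjz, hom, hodd⟩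
        refine ⟨hz, j + 6, by omega, by omega, by rwa [prep6_add], fun l hl1 hl2 => ?_, ?_⟩
        · rw [prep6_ge (by omega)]; exact hom (l - 6) (by omega) (by omega)
        · rw [Nat.odd_iff] at hodd ⊢; omega
      · rintro ⟨hz, j, hij, hjn, hjz, hom, hodd⟩
        rw [prep6_ge (show 6 ≤ j by omega)] at hjz
        refine ⟨hz, j - 6, by omega, by omega, hjz, fun l hl1 hl2 => ?_, ?_⟩
        · have := hom (l + 6) (by omega) (by omega)
          rwa [prep6_add] at this
        · rw [Nat.odd_iff] at hodd ⊢; omega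

theorem valid_ok {n : ℕ} {w : Word} (h : Valid3 (n + 6) w) (ho : Ok w) :
    Valid3 n (shift6 w) := by
  obtain ⟨h1, h2⟩ := h
  constructor
  · intro i hi; exact h1 _ (by omega)
  · intro i hi
    show (w (i + 6) = zx ∨ w (i + 6) = z1) ↔ (isZ (w (i + 6)) ∧ _)
    rw [h2 (i + 6) (by omega)]
    constructor
    · rintro ⟨hz, j, hij, hjn, hjz, hom, hodd⟩
      refine ⟨hz, j - 6, by omega, by omega, ?_, fun l hl1 hl2 => ?_, ?_⟩
      · rw [shift6_idx w (show j = (j - 6) + 6 by omega)]; exact hjz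
      · rw [shift6_idx w (rfl : l + 6 = l + 6)]
        exact hom (l + 6) (by omega) (by omega)
      · rw [Nat.odd_iff] at hodd ⊢; omega
    · rintro ⟨hz, j, hij, hjn, hjz, hom, hodd⟩
      refine ⟨hz, j + 6, by omega, by omega, hjz, fun l hl1 hl2 => ?_, ?_⟩
      · have := hom (l - 6) (by omega) (by omega)
        rwa [shift6_idx w (show l = (l - 6) + 6 by omega)] at this
      · rw [Nat.odd_iff] at hodd ⊢; omega

/-! ### Transfer of `Prefix3`, `Mpat3`, `MM3` -/

theorem prefix3_congr {z z' : Word} {p : ℕ} (h : ∀ i < p, z i = z' i)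
    (hp : Prefix3 z p) : Prefix3 z' p := by
  obtain ⟨a, b, hab, hom, hblk⟩ := hp
  refine ⟨a, b, hab, fun i hi => by rw [← h i (by omega)]; exact hom i hi, fun t ht => ?_⟩
  obtain ⟨c1, c2, c3⟩ := hblk t ht
  exact ⟨by rw [← h _ (by omega)]; exact c1, by rw [← h _ (by omega)]; exact c2,
    by rw [← h _ (by omega)]; exact c3⟩

theorem prefix3_prep6 {z : Word} {p : ℕ} (h : Prefix3 z p) : Prefix3 (prep6 z) (p + 6) := by
  obtain ⟨a, b, hab, hom, hblk⟩ := h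
  refine ⟨a + 6, b, by omega, fun i hi => ?_, fun t ht => ?_⟩
  · by_cases h6 : i < 6
    · exact prep6_lt h6
    · rw [prep6_ge (by omega)]; exact hom _ (by omega)
  · obtain ⟨c1, c2, c3⟩ := hblk t ht
    exact ⟨by rw [prep6_idx z (show a+6+3*t = (a+3*t)+6 by omega)]; exact c1,
      by rw [prep6_idx z (show a+6+3*t+1 = (a+3*t+1)+6 by omega)]; exact c2,
      by rw [prep6_idx z (show a+6+3*t+2 = (a+3*t+2)+6 by omega)]; exact c3⟩

theorem prefix3_shift {z : Word} {p : ℕ} (ho : Ok z) (h : Prefix3 z p) (h6 : 6 ≤ p) :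
    Prefix3 (shift6 z) (p - 6) := by
  obtain ⟨a, b, hab, hom, hblk⟩ := h
  rcases Nat.eq_zero_or_pos b with hb | hb
  · subst hb
    refine ⟨p - 6, 0, by omega, fun i hi => ?_, fun t ht => by omega⟩
    rw [shift6_idx z (rfl : i + 6 = i + 6)]; exact hom _ (by omega)
  · have ha6 : 6 ≤ a := by
      by_contra hlt
      have h1 := (hblk 0 hb).1
      simp only [Nat.mul_zero, Nat.add_zero] at h1
      rw [ho a (by omega)] at h1
      exact absurd h1 (by simp)
    refine ⟨a - 6, b, by omega, fun i hi => ?_, fun t ht => ?_⟩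
    · rw [shift6_idx z (rfl : i + 6 = i + 6)]; exact hom _ (by omega)
    · obtain ⟨c1, c2, c3⟩ := hblk t ht
      exact ⟨by rw [shift6_idx z (show a+3*t = (a-6+3*t)+6 by omega)]; exact c1,
        by rw [shift6_idx z (show a+3*t+1 = (a-6+3*t+1)+6 by omega)]; exact c2,
        by rw [shift6_idx z (show a+3*t+2 = (a-6+3*t+2)+6 by omega)]; exact c3⟩

theorem mm_prep6 {n : ℕ} {z x : Word} (h : MM3 n z x) : MM3 (n + 6) (prep6 z) (prep6 x) := by
  obtain ⟨hvz, hvx, p, hpre, hpat⟩ := h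
  refine ⟨valid_prep6 hvz, valid_prep6 hvx, p + 6, prefix3_prep6 hpre, ?_⟩
  have agree : ∀ (i : ℕ) (P : ℕ → Prop), (∀ j, P (j + 6) → x j = z j) →
      (i < 6 ∨ P i) → prep6 x i = prep6 z i := by
    intro i P hP hi
    by_cases h6 : i < 6
    · rw [prep6_lt h6, prep6_lt h6]
    · rw [prep6_ge (by omega), prep6_ge (by omega)]
      rcases hi with hi | hi
      · omega
      · exact hP (i - 6) (by rw [show i - 6 + 6 = i by omega]; exact hi)
  rcases hpat with ⟨hn, h1, h2, h3, h4, h5, h6, h7⟩ |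
    ⟨hn, h1, h2, h3, h4, h5, h6, h7, h8⟩ | ⟨hn, h1, h2, h3, h4, h5, h6⟩
  · refine Or.inl ⟨by omega, by rw [prep6_idx z rfl]; exact h1,
      by rw [prep6_idx z (show p+6+1 = (p+1)+6 by omega)]; exact h2,
      by rw [prep6_idx z (show p+6+2 = (p+2)+6 by omega)]; exact h3,
      by rw [prep6_idx x rfl, prep6_idx z (show p+6+2 = (p+2)+6 by omega)]; exact h4,
      by rw [prep6_idx x (show p+6+1 = (p+1)+6 by omega)]; exact h5,
      by rw [prep6_idx x (show p+6+2 = (p+2)+6 by omega)]; exact h6,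
      fun i hi1 hi2 hi3 => ?_⟩
    refine agree i (fun i => i ≠ p + 6 ∧ i ≠ p + 6 + 1 ∧ i ≠ p + 6 + 2)
      (fun j hj => h7 j (by omega) (by omega) (by omega)) ?_
    by_cases h6' : i < 6
    · exact Or.inl h6'
    · exact Or.inr ⟨hi1, hi2, hi3⟩
  · refine Or.inr (Or.inl ⟨by omega, by rw [prep6_idx z rfl]; exact h1,
      by rw [prep6_idx z (show p+6+1 = (p+1)+6 by omega)]; exact h2,
      by rw [prep6_idx z (show p+6+2 = (p+2)+6 by omega)]; exact h3,
      by rw [prep6_idx z (show p+6+3 = (p+3)+6 by omega)]; exact h4,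
      by rw [prep6_idx x (show p+6+1 = (p+1)+6 by omega),
        prep6_idx z (show p+6+3 = (p+3)+6 by omega)]; exact h5,
      by rw [prep6_idx x (show p+6+2 = (p+2)+6 by omega)]; exact h6,
      by rw [prep6_idx x (show p+6+3 = (p+3)+6 by omega)]; exact h7,
      fun i hi1 hi2 hi3 => ?_⟩)
    refine agree i (fun i => i ≠ p + 6 + 1 ∧ i ≠ p + 6 + 2 ∧ i ≠ p + 6 + 3)
      (fun j hj => h8 j (by omega) (by omega) (by omega)) ?_
    by_cases h6' : i < 6
    · exact Or.inl h6'
    · exact Or.inr ⟨hi1, hi2, hi3⟩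
  · refine Or.inr (Or.inr ⟨by omega, by rw [prep6_idx z rfl]; exact h1,
      by rw [prep6_idx z (show p+6+1 = (p+1)+6 by omega)]; exact h2,
      by rw [prep6_idx z (show p+6+2 = (p+2)+6 by omega)]; exact h3,
      by rw [prep6_idx x rfl]; exact h4,
      by rw [prep6_idx x (show p+6+1 = (p+1)+6 by omega)]; exact h5,
      fun i hi1 hi2 => ?_⟩)
    refine agree i (fun i => i ≠ p + 6 ∧ i ≠ p + 6 + 1)
      (fun j hj => h6 j (by omega) (by omega)) ?_
    by_cases h6' : i < 6
    · exact Or.inl h6'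
    · exact Or.inr ⟨hi1, hi2⟩

theorem mm_ok {n : ℕ} {Z X : Word} (h : MM3 (n + 6) Z X) (ho : Ok Z ∨ Ok X) :
    Ok Z ∧ Ok X ∧ MM3 n (shift6 Z) (shift6 X) := by
  obtain ⟨hvz, hvx, p, hpre, hpat⟩ := h
  have hmain : 6 ≤ p ∧ (∀ i < 6, X i = Z i) := by
    rcases hpat with ⟨hn, h1, h2, h3, h4, h5, h6, h7⟩ |
      ⟨hn, h1, h2, h3, h4, h5, h6, h7, h8⟩ | ⟨hn, h1, h2, h3, h4, h5, h6⟩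
    · have hp : 6 ≤ p := by
        by_contra hlt
        rcases ho with ho | ho
        · exact absurd ((ho p (by omega)) ▸ h1) (by decide)
        · exact (h4 ▸ h3) (ho p (by omega))
      exact ⟨hp, fun i hi => h7 i (by omega) (by omega) (by omega)⟩
    · have hp : 6 ≤ p := by
        by_contra hlt
        rcases ho with ho | ho
        · exact absurd ((ho p (by omega)) ▸ h1) (by decide)
        · have hxp : X p = Z p := h8 p (by omega) (by omega) (by omega)
          rw [ho p (by omega), h1] at hxp
          exact absurd hxp (by decide)
      exact ⟨hp, fun i hi => h8 i (by omega) (by omega) (by omega)⟩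
    · have hp : 6 ≤ p := by
        by_contra hlt
        rcases ho with ho | ho
        · exact absurd ((ho p (by omega)) ▸ h1) (by decide)
        · exact absurd ((ho p (by omega)) ▸ h4) (by decide)
      exact ⟨hp, fun i hi => h6 i (by omega) (by omega)⟩
  obtain ⟨hp6, hagree⟩ := hmain
  have okZ : Ok Z := by
    rcases ho with ho | ho
    · exact ho
    · intro i hi; rw [← hagree i hi]; exact ho i hi
  have okX : Ok X := fun i hi => (hagree i hi).trans (okZ i hi)
  refine ⟨okZ, okX, valid_ok hvz okZ, valid_ok hvx okX, p - 6,
    prefix3_shift okZ hpre hp6, ?_⟩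
  have agree : ∀ (i : ℕ) (P : ℕ → Prop), (∀ j, P j → X j = Z j) →
      P (i + 6) → shift6 X i = shift6 Z i := fun i P hP hi => hP (i + 6) hi
  rcases hpat with ⟨hn, h1, h2, h3, h4, h5, h6, h7⟩ |
    ⟨hn, h1, h2, h3, h4, h5, h6, h7, h8⟩ | ⟨hn, h1, h2, h3, h4, h5, h6⟩
  · refine Or.inl ⟨by omega, by rw [shift6_idx Z (show p = (p-6)+6 by omega)]; exact h1,
      by rw [shift6_idx Z (show p+1 = (p-6+1)+6 by omega)]; exact h2,
      by rw [shift6_idx Z (show p+2 = (p-6+2)+6 by omega)]; exact h3,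
      by rw [shift6_idx X (show p = (p-6)+6 by omega),
        shift6_idx Z (show p+2 = (p-6+2)+6 by omega)]; exact h4,
      by rw [shift6_idx X (show p+1 = (p-6+1)+6 by omega)]; exact h5,
      by rw [shift6_idx X (show p+2 = (p-6+2)+6 by omega)]; exact h6,
      fun i hi1 hi2 hi3 => h7 (i + 6) (by omega) (by omega) (by omega)⟩
  · exact Or.inr (Or.inl ⟨by omega,
      by rw [shift6_idx Z (show p = (p-6)+6 by omega)]; exact h1,
      by rw [shift6_idx Z (show p+1 = (p-6+1)+6 by omega)]; exact h2,
      by rw [shift6_idx Z (show p+2 = (p-6+2)+6 by omega)]; exact h3,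
      by rw [shift6_idx Z (show p+3 = (p-6+3)+6 by omega)]; exact h4,
      by rw [shift6_idx X (show p+1 = (p-6+1)+6 by omega),
        shift6_idx Z (show p+3 = (p-6+3)+6 by omega)]; exact h5,
      by rw [shift6_idx X (show p+2 = (p-6+2)+6 by omega)]; exact h6,
      by rw [shift6_idx X (show p+3 = (p-6+3)+6 by omega)]; exact h7,
      fun i hi1 hi2 hi3 => h8 (i + 6) (by omega) (by omega) (by omega)⟩)
  · exact Or.inr (Or.inr ⟨by omega,
      by rw [shift6_idx Z (show p = (p-6)+6 by omega)]; exact h1,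
      by rw [shift6_idx Z (show p+1 = (p-6+1)+6 by omega)]; exact h2,
      by rw [shift6_idx Z (show p+2 = (p-6+2)+6 by omega)]; exact h3,
      by rw [shift6_idx X (show p = (p-6)+6 by omega)]; exact h4,
      by rw [shift6_idx X (show p+1 = (p-6+1)+6 by omega)]; exact h5,
      fun i hi1 hi2 => h6 (i + 6) (by omega) (by omega)⟩)

theorem mm_back {n : ℕ} {z x : Word} (h : MM3 (n + 6) (prep6 z) (prep6 x)) : MM3 n z x := by
  have h2 := (mm_ok h (Or.inl (ok_prep6 z))).2.2
  rwa [shift6_prep6, shift6_prep6] at h2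

/-! ### Transfer of `E3` -/

theorem odd_congr {m l : ℕ} (h : m = l) : Odd m ↔ Odd l := by rw [h]

theorem e3_prep6 {n : ℕ} {a b : Word} (h : E3 n a b) : E3 (n + 6) (prep6 a) (prep6 b) := by
  obtain ⟨hva, hvb, q, hq, haq, hbq, hbr⟩ := h
  have hodd : ∀ u v : ℕ, Odd ((u + 6) - (v + 6) - 1) ↔ Odd (u - v - 1) :=
    fun u v => odd_congr (by omega)
  have hagree : ∀ (P : ℕ → Prop), (∀ j, P (j + 6) → b j = a j) →
      ∀ i, (¬ i < 6 → P i) → prep6 b i = prep6 a i := by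
    intro P hP i hi
    by_cases h6 : i < 6
    · rw [prep6_lt h6, prep6_lt h6]
    · rw [prep6_ge (by omega), prep6_ge (by omega)]
      exact hP (i - 6) (by rw [show i - 6 + 6 = i by omega]; exact hi h6)
  refine ⟨valid_prep6 hva, valid_prep6 hvb, q + 6, by omega,
    by rw [prep6_add]; exact haq, by rw [prep6_add]; exact hbq, ?_⟩
  rcases hbr with ⟨hfirst, hlab⟩ | ⟨p, hpq, hap, hbet, hrest⟩
  · refine Or.inl ⟨fun i hi => ?_, fun i hi => ?_⟩
    · by_cases h6 : i < 6
      · exact prep6_lt h6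
      · rw [prep6_ge (by omega)]; exact hfirst _ (by omega)
    · exact hagree (fun i => i ≠ q + 6) (fun j hj => hlab j (by omega)) i (fun _ => hi)
  · refine Or.inr ⟨p + 6, by omega, by rw [prep6_add]; exact hap,
      fun i hi1 hi2 => by rw [prep6_ge (by omega)]; exact hbet _ (by omega) (by omega), ?_⟩
    rcases hrest with ⟨hafter, hsub⟩ | ⟨j, hqj, hjn, haj, hbet2, hsub⟩
    · refine Or.inl ⟨fun i hi => by rw [prep6_ge (by omega)]; exact hafter _ (by omega), ?_⟩
      rcases hsub with ⟨ho1, hbp, hlab⟩ | ⟨ho1, hlab⟩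
      · exact Or.inl ⟨(hodd q p).mpr ho1, by rw [prep6_add]; exact hbp,
          fun i hi1 hi2 => hagree (fun i => i ≠ p + 6 ∧ i ≠ q + 6)
            (fun j hj => hlab j (by omega) (by omega)) i (fun _ => ⟨hi1, hi2⟩)⟩
      · exact Or.inr ⟨fun hh => ho1 ((hodd q p).mp hh), fun i hi =>
          hagree (fun i => i ≠ q + 6) (fun j hj => hlab j (by omega)) i (fun _ => hi)⟩
    · refine Or.inr ⟨j + 6, by omega, by omega, by rw [prep6_add]; exact haj,
        fun i hi1 hi2 => by rw [prep6_ge (by omega)]; exact hbet2 _ (by omega) (by omega), ?_⟩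
      rcases hsub with ⟨o1, o2, hne, hmul, hlab⟩ | ⟨o1, o2, hbp, hlab⟩ |
        ⟨o1, o2, hlab⟩ | ⟨o1, o2, hbp, hlab⟩
      · refine Or.inl ⟨(hodd q p).mpr o1, (hodd j q).mpr o2, ?_, ?_, fun i hi1 hi2 =>
          hagree (fun i => i ≠ p + 6 ∧ i ≠ q + 6)
            (fun l hl => hlab l (by omega) (by omega)) i (fun _ => ⟨hi1, hi2⟩)⟩
        · rw [prep6_add, prep6_add]; exact hne
        · rcases hmul with ⟨e1, e2, e3⟩ | ⟨hne2, e3⟩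
          · exact Or.inl ⟨by rw [prep6_add]; exact e1, by rw [prep6_add]; exact e2,
              by rw [prep6_add]; exact e3⟩
          · exact Or.inr ⟨by rw [prep6_add, prep6_add]; exact hne2,
              by rw [prep6_add]; exact e3⟩
      · exact Or.inr (Or.inl ⟨(hodd q p).mpr o1, fun hh => o2 ((hodd j q).mp hh),
          by rw [prep6_add]; exact hbp, fun i hi1 hi2 =>
          hagree (fun i => i ≠ p + 6 ∧ i ≠ q + 6)
            (fun l hl => hlab l (by omega) (by omega)) i (fun _ => ⟨hi1, hi2⟩)⟩)
      · exact Or.inr (Or.inr (Or.inl ⟨fun hh => o1 ((hodd q p).mp hh), (hodd j q).mpr o2,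
          fun i hi => hagree (fun i => i ≠ q + 6) (fun l hl => hlab l (by omega)) i
            (fun _ => hi)⟩))
      · refine Or.inr (Or.inr (Or.inr ⟨fun hh => o1 ((hodd q p).mp hh),
          fun hh => o2 ((hodd j q).mp hh), ?_, fun i hi1 hi2 =>
          hagree (fun i => i ≠ p + 6 ∧ i ≠ q + 6)
            (fun l hl => hlab l (by omega) (by omega)) i (fun _ => ⟨hi1, hi2⟩)⟩))
        rcases hbp with e | e
        · exact Or.inl (by rw [prep6_add]; exact e)
        · exact Or.inr (by rw [prep6_add]; exact e)

theorem e3_ok {n : ℕ} {A B : Word} (h : E3 (n + 6) A B) (ho : Ok A) :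
    Ok B ∧ E3 n (shift6 A) (shift6 B) := by
  obtain ⟨hva, hvb, q, hq, haq, hbq, hbr⟩ := h
  have hq6 : 6 ≤ q := by by_contra hlt; exact haq (ho q (by omega))
  have okB : Ok B := by
    intro i hi
    rcases hbr with ⟨hfirst, hlab⟩ | ⟨p, hpq, hap, hbet, hrest⟩
    · rw [hlab i (by omega)]; exact ho i hi
    · have hp6 : 6 ≤ p := by by_contra hlt; exact hap (ho p (by omega))
      rcases hrest with ⟨hafter, hsub⟩ | ⟨j, hqj, hjn, haj, hbet2, hsub⟩
      · rcases hsub with ⟨o1, hbp, hlab⟩ | ⟨o1, hlab⟩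
        · rw [hlab i (by omega) (by omega)]; exact ho i hi
        · rw [hlab i (by omega)]; exact ho i hi
      · rcases hsub with ⟨o1, o2, hne, hmul, hlab⟩ | ⟨o1, o2, hbp, hlab⟩ |
          ⟨o1, o2, hlab⟩ | ⟨o1, o2, hbp, hlab⟩
        · rw [hlab i (by omega) (by omega)]; exact ho i hi
        · rw [hlab i (by omega) (by omega)]; exact ho i hi
        · rw [hlab i (by omega)]; exact ho i hi
        · rw [hlab i (by omega) (by omega)]; exact ho i hi
  refine ⟨okB, valid_ok hva ho, valid_ok hvb okB, q - 6, by omega,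
    by rw [shift6_idx A (show q = (q - 6) + 6 by omega)]; exact haq,
    by rw [shift6_idx B (show q = (q - 6) + 6 by omega)]; exact hbq, ?_⟩
  rcases hbr with ⟨hfirst, hlab⟩ | ⟨p, hpq, hap, hbet, hrest⟩
  · exact Or.inl ⟨fun i hi => hfirst (i + 6) (by omega),
      fun i hi => hlab (i + 6) (by omega)⟩
  · have hp6 : 6 ≤ p := by by_contra hlt; exact hap (ho p (by omega))
    have hoqp : Odd (q - 6 - (p - 6) - 1) ↔ Odd (q - p - 1) := odd_congr (by omega)
    refine Or.inr ⟨p - 6, by omega, by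
        rw [shift6_idx A (show p = (p - 6) + 6 by omega)]; exact hap,
      fun i hi1 hi2 => hbet (i + 6) (by omega) (by omega), ?_⟩
    rcases hrest with ⟨hafter, hsub⟩ | ⟨j, hqj, hjn, haj, hbet2, hsub⟩
    · refine Or.inl ⟨fun i hi => hafter (i + 6) (by omega), ?_⟩
      rcases hsub with ⟨o1, hbp, hlab⟩ | ⟨o1, hlab⟩
      · exact Or.inl ⟨hoqp.mpr o1,
          by rw [shift6_idx B (show p = (p - 6) + 6 by omega)]; exact hbp,
          fun i hi1 hi2 => hlab (i + 6) (by omega) (by omega)⟩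
      · exact Or.inr ⟨fun hh => o1 (hoqp.mp hh), fun i hi => hlab (i + 6) (by omega)⟩
    · have hojq : Odd (j - 6 - (q - 6) - 1) ↔ Odd (j - q - 1) := odd_congr (by omega)
      refine Or.inr ⟨j - 6, by omega, by omega,
        by rw [shift6_idx A (show j = (j - 6) + 6 by omega)]; exact haj,
        fun i hi1 hi2 => hbet2 (i + 6) (by omega) (by omega), ?_⟩
      rcases hsub with ⟨o1, o2, hne, hmul, hlab⟩ | ⟨o1, o2, hbp, hlab⟩ |
        ⟨o1, o2, hlab⟩ | ⟨o1, o2, hbp, hlab⟩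
      · refine Or.inl ⟨hoqp.mpr o1, hojq.mpr o2, ?_, ?_,
          fun i hi1 hi2 => hlab (i + 6) (by omega) (by omega)⟩
        · rw [shift6_idx A (show p = (p - 6) + 6 by omega),
            shift6_idx A (show q = (q - 6) + 6 by omega)]; exact hne
        · rcases hmul with ⟨e1, e2, e3⟩ | ⟨hne2, e3⟩
          · exact Or.inl ⟨by rw [shift6_idx A (show p = (p - 6) + 6 by omega)]; exact e1,
              by rw [shift6_idx A (show q = (q - 6) + 6 by omega)]; exact e2,
              by rw [shift6_idx B (show p = (p - 6) + 6 by omega)]; exact e3⟩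
          · exact Or.inr ⟨by rw [shift6_idx A (show p = (p - 6) + 6 by omega),
                shift6_idx A (show q = (q - 6) + 6 by omega)]; exact hne2,
              by rw [shift6_idx B (show p = (p - 6) + 6 by omega)]; exact e3⟩
      · exact Or.inr (Or.inl ⟨hoqp.mpr o1, fun hh => o2 (hojq.mp hh),
          by rw [shift6_idx B (show p = (p - 6) + 6 by omega)]; exact hbp,
          fun i hi1 hi2 => hlab (i + 6) (by omega) (by omega)⟩)
      · exact Or.inr (Or.inr (Or.inl ⟨fun hh => o1 (hoqp.mp hh), hojq.mpr o2,
          fun i hi => hlab (i + 6) (by omega)⟩))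
      · refine Or.inr (Or.inr (Or.inr ⟨fun hh => o1 (hoqp.mp hh),
          fun hh => o2 (hojq.mp hh), ?_,
          fun i hi1 hi2 => hlab (i + 6) (by omega) (by omega)⟩))
        rcases hbp with e | e
        · exact Or.inl (by rw [shift6_idx B (show p = (p - 6) + 6 by omega)]; exact e)
        · exact Or.inr (by rw [shift6_idx B (show p = (p - 6) + 6 by omega)]; exact e)

theorem e3_back {n : ℕ} {a b : Word} (h : E3 (n + 6) (prep6 a) (prep6 b)) : E3 n a b := by
  have h2 := (e3_ok h (ok_prep6 a)).2
  rwa [shift6_prep6, shift6_prep6] at h2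

/-! ### Infrastructure for validity checks -/

/-- The validity condition of `Valid3` at one position. -/
def Cond (n : ℕ) (w : Word) (i : ℕ) : Prop :=
  (w i = zx ∨ w i = z1) ↔ (isZ (w i) ∧ ∃ j, i < j ∧ j < n ∧ isZ (w j) ∧
    (∀ l, i < l → l < j → w l = om) ∧ Odd (j - i - 1))

theorem valid3_def {n : ℕ} {w : Word} :
    Valid3 n w ↔ ((∀ i, n ≤ i → w i = om) ∧ ∀ i < n, Cond n w i) := Iff.rfl

theorem isZ_zx : isZ zx := fun h => by cases h
theorem isZ_z1 : isZ z1 := fun h => by cases h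
theorem isZ_zm : isZ zm := fun h => by cases h

theorem valid_at_om {n : ℕ} {w : Word} {i : ℕ} (h : w i = om) : Cond n w i := by
  unfold Cond isZ
  rw [h]
  simp

theorem valid_at_zm {n : ℕ} {w : Word} {i : ℕ} (h : w i = zm)
    (hno : ∀ j, i < j → j < n → isZ (w j) → (∀ l, i < l → l < j → w l = om) →
      ¬ Odd (j - i - 1)) : Cond n w i := by
  constructor
  · rintro (h' | h') <;> rw [h] at h' <;> exact absurd h' (by decide)
  · rintro ⟨hz, j, a1, a2, a3, a4, a5⟩
    exact absurd a5 (hno j a1 a2 a3 a4)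

theorem valid_at_lab {n : ℕ} {w : Word} {i : ℕ} (hlab : w i = zx ∨ w i = z1)
    (j : ℕ) (a1 : i < j) (a2 : j < n) (a3 : isZ (w j))
    (a4 : ∀ l, i < l → l < j → w l = om) (a5 : Odd (j - i - 1)) : Cond n w i := by
  have hz : isZ (w i) := by
    rcases hlab with h | h <;> rw [h]
    exacts [isZ_zx, isZ_z1]
  exact ⟨fun _ => ⟨hz, j, a1, a2, a3, a4, a5⟩, fun _ => hlab⟩

theorem cond_transport {n : ℕ} {u v : Word} {s t m : ℕ}
    (hst : s % 2 = t % 2) (hsm : s ≤ m) (htm : t ≤ m) (hmn : m < n)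
    (hval : u s = v t) (hz : isZ (v t))
    (hu : ∀ l, s < l → l ≤ m → u l = om) (hvv : ∀ l, t < l → l ≤ m → v l = om)
    (hagree : ∀ l, m < l → u l = v l)
    (hcondv : Cond n v t) : Cond n u s := by
  unfold Cond at hcondv ⊢
  rw [hval]
  constructor
  · intro hl
    obtain ⟨hz', j, a1, a2, a3, a4, a5⟩ := hcondv.mp hl
    have hjm : m < j := by
      by_contra hh
      exact a3 (hvv j a1 (by omega))
    refine ⟨hz, j, by omega, a2, by rw [hagree j hjm]; exact a3, fun l l1 l2 => ?_, ?_⟩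
    · by_cases hlm : l ≤ m
      · exact hu l l1 hlm
      · rw [hagree l (by omega)]; exact a4 l (by omega) l2
    · rw [Nat.odd_iff] at a5 ⊢; omega
  · rintro ⟨hz', j, a1, a2, a3, a4, a5⟩
    have hjm : m < j := by
      by_contra hh
      exact a3 (hu j a1 (by omega))
    refine hcondv.mpr ⟨hz, j, by omega, a2, by rw [← hagree j hjm]; exact a3,
      fun l l1 l2 => ?_, ?_⟩
    · by_cases hlm : l ≤ m
      · exact hvv l l1 hlm
      · rw [← hagree l (by omega)]; exact a4 l (by omega) l2
    · rw [Nat.odd_iff] at a5 ⊢; omega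

theorem valid_above {n : ℕ} {u v : Word} (hv : Valid3 n v) {m : ℕ}
    (hagree : ∀ i, m ≤ i → u i = v i) :
    ∀ i, m ≤ i → i < n → Cond n u i := by
  intro i h1 h2
  have hc := hv.2 i h2
  unfold Cond
  constructor
  · intro hl
    have hl' : v i = zx ∨ v i = z1 := by rwa [hagree i h1] at hl
    obtain ⟨hz, j, a1, a2, a3, a4, a5⟩ := hc.mp hl'
    exact ⟨by rwa [hagree i h1], j, a1, a2, by rwa [hagree j (by omega)],
      fun l l1 l2 => by rw [hagree l (by omega)]; exact a4 l l1 l2, a5⟩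
  · rintro ⟨hz, j, a1, a2, a3, a4, a5⟩
    have := hc.mpr ⟨by rwa [hagree i h1] at hz, j, a1, a2,
      by rwa [hagree j (by omega)] at a3,
      fun l l1 l2 => by rw [← hagree l (by omega)]; exact a4 l l1 l2, a5⟩
    rwa [hagree i h1]

theorem valid_below {n : ℕ} {u : Word} {p : ℕ} (hpre : Prefix3 u p) (hp : isZ (u p))
    (hpn : p < n) : ∀ i < p, Cond n u i := by
  obtain ⟨a, b, hab, hom, hblk⟩ := hpre
  intro i hi
  by_cases hia : i < a
  · exact valid_at_om (hom i hia)
  · have ht : ∃ t r, t < b ∧ r < 3 ∧ i = a + 3 * t + r := by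
      refine ⟨(i - a) / 3, (i - a) % 3, by omega, by omega, by omega⟩
    obtain ⟨t, r, htb, hr3, hi'⟩ := ht
    subst hi'
    interval_cases r
    · -- `u i = zm`, next zero at distance 1 (gap 0)
      refine valid_at_zm (by simpa using (hblk t htb).1) ?_
      intro j a1 a2 a3 a4
      have hj : j = a + 3 * t + 1 := by
        by_contra hne
        have h1 := (hblk t htb).2.1
        exact absurd (a4 (a + 3 * t + 1) (by omega) (by omega)) (by rw [h1]; decide)
      rw [hj]
      rw [show a + 3 * t + 1 - (a + 3 * t + 0) - 1 = 0 by omega]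
      decide
    · -- `u i = zx`, next zero at `i + 2`
      have hz2 : isZ (u (a + 3 * t + 1 + 2)) := by
        by_cases hlast : t + 1 < b
        · have := (hblk (t + 1) hlast).1
          rw [show a + 3 * t + 1 + 2 = a + 3 * (t + 1) by omega, this]; exact isZ_zm
        · rw [show a + 3 * t + 1 + 2 = p by omega]; exact hp
      refine valid_at_lab (Or.inl (by simpa using (hblk t htb).2.1))
        (a + 3 * t + 1 + 2) (by omega) (by omega) hz2 ?_ ?_
      · intro l l1 l2
        have : l = a + 3 * t + 2 := by omega
        rw [this]; exact (hblk t htb).2.2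
      · rw [show a + 3 * t + 1 + 2 - (a + 3 * t + 1) - 1 = 1 by omega]; decide
    · exact valid_at_om ((hblk t htb).2.2)

theorem nextzero_unique {w : Word} {i j j' : ℕ}
    (hij : i < j) (hz : isZ (w j)) (hbet : ∀ l, i < l → l < j → w l = om)
    (hij' : i < j') (hz' : isZ (w j')) (hbet' : ∀ l, i < l → l < j' → w l = om) :
    j = j' := by
  rcases lt_trichotomy j j' with h | h | h
  · exact absurd (hbet' j hij h) hz
  · exact h
  · exact absurd (hbet j' hij' h) hz'

theorem find_next {n : ℕ} (w : Word) (q : ℕ) :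
    (∀ i, q < i → i < n → w i = om) ∨
    ∃ j, q < j ∧ j < n ∧ isZ (w j) ∧ ∀ i, q < i → i < j → w i = om := by
  classical
  by_cases hex : ∃ j, q < j ∧ j < n ∧ isZ (w j)
  · right
    refine ⟨Nat.find hex, (Nat.find_spec hex).1, (Nat.find_spec hex).2.1,
      (Nat.find_spec hex).2.2, ?_⟩
    intro i h1 h2
    by_contra hne
    exact Nat.find_min hex h2 ⟨h1, by
      have := (Nat.find_spec hex).2.1; omega, hne⟩
  · left
    intro i h1 h2
    by_contra hne
    exact hex ⟨i, h1, h2, hne⟩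

/-- If a zero has a (unique) next zero at even distance, it is labelled `zm`. -/
theorem zm_of_even {n : ℕ} {w : Word} (hv : Valid3 n w) {i j : ℕ} (hin : i < n)
    (hz : isZ (w i)) (hij : i < j) (hjn : j < n) (hzj : isZ (w j))
    (hbet : ∀ l, i < l → l < j → w l = om) (hev : ¬ Odd (j - i - 1)) : w i = zm := by
  have hc := hv.2 i hin
  by_cases hl : w i = zx ∨ w i = z1
  · obtain ⟨-, j', a1, a2, a3, a4, a5⟩ := hc.mp hl
    have := nextzero_unique hij hzj hbet a1 a3 a4
    rw [this] at hev
    exact absurd a5 hev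
  · cases hw : w i <;> first
      | rfl
      | (exact absurd (Or.inl hw) hl) | (exact absurd (Or.inr hw) hl)
      | (exact absurd hw hz)

/-- If a zero has no next zero at all, it is labelled `zm`. -/
theorem zm_of_none {n : ℕ} {w : Word} (hv : Valid3 n w) {i : ℕ} (hin : i < n)
    (hz : isZ (w i)) (hafter : ∀ l, i < l → l < n → w l = om) : w i = zm := by
  have hc := hv.2 i hin
  by_cases hl : w i = zx ∨ w i = z1
  · obtain ⟨-, j', a1, a2, a3, a4, a5⟩ := hc.mp hl
    exact absurd (hafter j' a1 a2) a3
  · cases hw : w i <;> first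
      | rfl
      | (exact absurd (Or.inl hw) hl) | (exact absurd (Or.inr hw) hl)
      | (exact absurd hw hz)

/-- If a zero has a next zero at odd distance, it is labelled. -/
theorem lab_of_odd {n : ℕ} {w : Word} (hv : Valid3 n w) {i j : ℕ} (hin : i < n)
    (hz : isZ (w i)) (hij : i < j) (hjn : j < n) (hzj : isZ (w j))
    (hbet : ∀ l, i < l → l < j → w l = om) (ho : Odd (j - i - 1)) :
    w i = zx ∨ w i = z1 :=
  (hv.2 i hin).mpr ⟨hz, j, hij, hjn, hzj, hbet, ho⟩


/-- Every matched pair is an edge of the cube. -/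
theorem mm_e3 {n : ℕ} {z x : Word} (h : MM3 n z x) : E3 n z x := by
  obtain ⟨hvz, hvx, p, hpre, hpat⟩ := h
  refine ⟨hvz, hvx, ?_⟩
  rcases hpat with ⟨hn, h1, h2, h3, h4, h5, h6, h7⟩ |
    ⟨hn, h1, h2, h3, h4, h5, h6, h7, h8⟩ | ⟨hn, h1, h2, h3, h4, h5, h6⟩
  · -- pattern (a): q = p+2, previous zero p, circle (p, p+2)
    have hrest : ∀ i, i ≠ p → i ≠ p + 2 → x i = z i := by
      intro i l1 l2
      by_cases hip : i = p + 1
      · rw [hip, h5, h2]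
      · exact h7 i l1 hip l2
    have hgap : Odd (p + 2 - p - 1) := by rw [show p + 2 - p - 1 = 1 by omega]; exact ⟨0, rfl⟩
    refine ⟨p + 2, hn, h3, h6, Or.inr ⟨p, by omega, by rw [h1]; exact isZ_z1,
      (fun i l1 l2 => by rw [(by omega : i = p + 1)]; exact h2), ?_⟩⟩
    rcases find_next (n := n) z (p + 2) with hafter | ⟨j, a1, a2, a3, a4⟩
    · have hafter' : ∀ i, p + 2 < i → z i = om := by
        intro i hi
        rcases Nat.lt_or_ge i n with hin | hin
        · exact hafter i hi hin
        · exact hvz.1 i hin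
      have hzm : z (p + 2) = zm := zm_of_none hvz hn h3 hafter
      exact Or.inl ⟨hafter', Or.inl ⟨hgap, by rw [h4, hzm], hrest⟩⟩
    · refine Or.inr ⟨j, a1, a2, a3, a4, ?_⟩
      by_cases hodd : Odd (j - (p + 2) - 1)
      · have hlab := lab_of_odd hvz hn h3 a1 a2 a3 a4 hodd
        refine Or.inl ⟨hgap, hodd, by rintro ⟨hc, -⟩; rw [h1] at hc; exact absurd hc (by decide),
          ?_, hrest⟩
        rcases hlab with hl | hl
        · exact Or.inr ⟨by rintro ⟨-, hc⟩; rw [hl] at hc; exact absurd hc (by decide),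
            by rw [h4, hl]⟩
        · exact Or.inl ⟨h1, hl, by rw [h4, hl]⟩
      · have hzm : z (p + 2) = zm := zm_of_even hvz hn h3 a1 a2 a3 a4 hodd
        exact Or.inr (Or.inl ⟨hgap, hodd, by rw [h4, hzm], hrest⟩)
  · -- pattern (b): q = p+3, previous zero p+1, circle (p+1, p+3)
    have hrest : ∀ i, i ≠ p + 1 → i ≠ p + 3 → x i = z i := by
      intro i l1 l2
      by_cases hip : i = p + 2
      · rw [hip, h6, h3]
      · exact h8 i l1 hip l2
    have hgap : Odd (p + 3 - (p + 1) - 1) := by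
      rw [show p + 3 - (p + 1) - 1 = 1 by omega]; exact ⟨0, rfl⟩
    refine ⟨p + 3, hn, h4, h7, Or.inr ⟨p + 1, by omega, by rw [h2]; exact isZ_z1,
      (fun i l1 l2 => by rw [(by omega : i = p + 2)]; exact h3), ?_⟩⟩
    rcases find_next (n := n) z (p + 3) with hafter | ⟨j, a1, a2, a3, a4⟩
    · have hafter' : ∀ i, p + 3 < i → z i = om := by
        intro i hi
        rcases Nat.lt_or_ge i n with hin | hin
        · exact hafter i hi hin
        · exact hvz.1 i hin
      have hzm : z (p + 3) = zm := zm_of_none hvz hn h4 hafter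
      exact Or.inl ⟨hafter', Or.inl ⟨hgap, by rw [h5, hzm], hrest⟩⟩
    · refine Or.inr ⟨j, a1, a2, a3, a4, ?_⟩
      by_cases hodd : Odd (j - (p + 3) - 1)
      · have hlab := lab_of_odd hvz hn h4 a1 a2 a3 a4 hodd
        refine Or.inl ⟨hgap, hodd, by rintro ⟨hc, -⟩; rw [h2] at hc; exact absurd hc (by decide),
          ?_, hrest⟩
        rcases hlab with hl | hl
        · exact Or.inr ⟨by rintro ⟨-, hc⟩; rw [hl] at hc; exact absurd hc (by decide),
            by rw [h5, hl]⟩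
        · exact Or.inl ⟨h2, hl, by rw [h5, hl]⟩
      · have hzm : z (p + 3) = zm := zm_of_even hvz hn h4 a1 a2 a3 a4 hodd
        exact Or.inr (Or.inl ⟨hgap, hodd, by rw [h5, hzm], hrest⟩)
  · -- pattern (c): q = p+1, previous zero p, next zero p+2, split
    refine ⟨p + 1, by omega, by rw [h2]; exact isZ_zm, h5, Or.inr ⟨p, by omega,
      by rw [h1]; exact isZ_zm, (fun i l1 l2 => absurd l2 (by omega)), Or.inr
      ⟨p + 2, by omega, hn, h3, (fun i l1 l2 => absurd l2 (by omega)), Or.inr (Or.inr (Or.inr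
      ⟨by rw [show p + 1 - p - 1 = 0 by omega]; decide,
       by rw [show p + 2 - (p + 1) - 1 = 0 by omega]; decide,
       Or.inl h4, fun i l1 l2 => h6 i l1 l2⟩))⟩⟩⟩


/-! ### The six matching constructions -/

theorem match_az {n : ℕ} {v : Word} {p : ℕ} (hv : Valid3 n v) (hpre : Prefix3 v p)
    (hn : p + 2 < n) (h0 : v p = z1) (h1 : v (p + 1) = om) (h2 : isZ (v (p + 2))) :
    ∃ x, MM3 n v x := by
  set x : Word := fun i => if i = p then v (p + 2) else if i = p + 1 then om
    else if i = p + 2 then om else v i with hxdef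
  have e0 : x p = v (p + 2) := by simp [hxdef]
  have e1 : x (p + 1) = om := by simp [hxdef]
  have e2 : x (p + 2) = om := by simp [hxdef]
  have erest : ∀ i, i ≠ p → i ≠ p + 1 → i ≠ p + 2 → x i = v i := by
    intro i n1 n2 n3; simp only [hxdef]; rw [if_neg n1, if_neg n2, if_neg n3]
  have hvx : Valid3 n x := by
    rw [valid3_def]
    refine ⟨fun i hi => by
      rw [erest i (by omega) (by omega) (by omega)]; exact hv.1 i hi, fun i hi => ?_⟩
    rcases lt_trichotomy i p with hip | hip | hip
    · exact valid_below (prefix3_congr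
        (fun l hl => (erest l (by omega) (by omega) (by omega)).symm) hpre)
        (by rw [e0]; exact h2) (by omega) i hip
    · subst hip
      refine cond_transport (u := x) (v := v) (s := i) (t := i + 2) (m := i + 2)
        (by omega) (by omega) (by omega) hn e0 h2 ?_ (fun l l1 l2 => by omega)
        (fun l hl => erest l (by omega) (by omega) (by omega)) (hv.2 (i + 2) hn)
      intro l l1 l2
      rcases (by omega : l = i + 1 ∨ l = i + 2) with h | h <;> rw [h]
      exacts [e1, e2]
    · rcases Nat.lt_or_ge i (p + 3) with hip3 | hip3
      · rcases (by omega : i = p + 1 ∨ i = p + 2) with h | h <;> subst h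
        · exact valid_at_om e1
        · exact valid_at_om e2
      · exact valid_above hv
          (fun l hl => erest l (by omega) (by omega) (by omega)) i hip3 hi
  exact ⟨x, hv, hvx, p, hpre, Or.inl ⟨hn, h0, h1, h2, e0, e1, e2, erest⟩⟩

theorem match_ax {n : ℕ} {v : Word} {p : ℕ} (hv : Valid3 n v) (hpre : Prefix3 v p)
    (hn : p + 2 < n) (h0 : isZ (v p)) (h1 : v (p + 1) = om) (h2 : v (p + 2) = om) :
    ∃ z, MM3 n z v := by
  set z : Word := fun i => if i = p then z1 else if i = p + 2 then v p else v i with hzdef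
  have e0 : z p = z1 := by simp [hzdef]
  have e2 : z (p + 2) = v p := by simp [hzdef]
  have erest : ∀ i, i ≠ p → i ≠ p + 2 → z i = v i := by
    intro i n1 n2; simp only [hzdef]; rw [if_neg n1, if_neg n2]
  have e1 : z (p + 1) = om := by rw [erest (p + 1) (by omega) (by omega)]; exact h1
  have hvz : Valid3 n z := by
    rw [valid3_def]
    refine ⟨fun i hi => by
      rw [erest i (by omega) (by omega)]; exact hv.1 i hi, fun i hi => ?_⟩
    rcases lt_trichotomy i p with hip | hip | hip
    · exact valid_below (prefix3_congr
        (fun l hl => (erest l (by omega) (by omega)).symm) hpre)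
        (by rw [e0]; exact isZ_z1) (by omega) i hip
    · subst hip
      exact valid_at_lab (Or.inr e0) (i + 2) (by omega) hn (by rw [e2]; exact h0)
        (fun l l1 l2 => by rw [(by omega : l = i + 1)]; exact e1)
        (by rw [show i + 2 - i - 1 = 1 by omega]; exact ⟨0, rfl⟩)
    · rcases Nat.lt_or_ge i (p + 3) with hip3 | hip3
      · rcases (by omega : i = p + 1 ∨ i = p + 2) with h | h <;> subst h
        · exact valid_at_om e1
        · refine cond_transport (u := z) (v := v) (s := p + 2) (t := p) (m := p + 2)
            (by omega) (by omega) (by omega) hn e2 h0 (fun l l1 l2 => by omega) ?_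
            (fun l hl => erest l (by omega) (by omega)) (hv.2 p (by omega))
          intro l l1 l2
          rcases (by omega : l = p + 1 ∨ l = p + 2) with h | h <;> rw [h]
          exacts [h1, h2]
      · exact valid_above hv (fun l hl => erest l (by omega) (by omega)) i hip3 hi
  exact ⟨z, hvz, hv, p,
    prefix3_congr (fun l hl => (erest l (by omega) (by omega)).symm) hpre,
    Or.inl ⟨hn, e0, e1, by rw [e2]; exact h0, e2.symm, h1, h2,
      fun i n1 n2 n3 => (erest i n1 n3).symm⟩⟩

theorem match_bz {n : ℕ} {v : Word} {p : ℕ} (hv : Valid3 n v) (hpre : Prefix3 v p)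
    (hn : p + 3 < n) (h0 : v p = zm) (h1 : v (p + 1) = z1) (h2 : v (p + 2) = om)
    (h3 : isZ (v (p + 3))) : ∃ x, MM3 n v x := by
  set x : Word := fun i => if i = p + 1 then v (p + 3) else if i = p + 3 then om
    else v i with hxdef
  have e1 : x (p + 1) = v (p + 3) := by simp [hxdef]
  have e3 : x (p + 3) = om := by simp [hxdef]
  have erest : ∀ i, i ≠ p + 1 → i ≠ p + 3 → x i = v i := by
    intro i n1 n2; simp only [hxdef]; rw [if_neg n1, if_neg n2]
  have e0 : x p = zm := by rw [erest p (by omega) (by omega)]; exact h0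
  have e2 : x (p + 2) = om := by rw [erest (p + 2) (by omega) (by omega)]; exact h2
  have hvx : Valid3 n x := by
    rw [valid3_def]
    refine ⟨fun i hi => by
      rw [erest i (by omega) (by omega)]; exact hv.1 i hi, fun i hi => ?_⟩
    rcases lt_trichotomy i p with hip | hip | hip
    · exact valid_below (prefix3_congr
        (fun l hl => (erest l (by omega) (by omega)).symm) hpre)
        (by rw [e0]; exact isZ_zm) (by omega) i hip
    · subst hip
      refine valid_at_zm e0 ?_
      intro j a1 a2 a3 a4
      have hj : j = i + 1 := by
        by_contra hne
        exact absurd (a4 (i + 1) (by omega) (by omega)) (by rw [e1]; exact h3)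
      rw [hj, show i + 1 - i - 1 = 0 by omega]
      decide
    · rcases Nat.lt_or_ge i (p + 4) with hip4 | hip4
      · rcases (by omega : i = p + 1 ∨ i = p + 2 ∨ i = p + 3) with h | h | h <;> subst h
        · refine cond_transport (u := x) (v := v) (s := p + 1) (t := p + 3) (m := p + 3)
            (by omega) (by omega) (by omega) hn e1 h3 ?_ (fun l l1 l2 => by omega)
            (fun l hl => erest l (by omega) (by omega)) (hv.2 (p + 3) hn)
          intro l l1 l2
          rcases (by omega : l = p + 2 ∨ l = p + 3) with h | h <;> rw [h]
          exacts [e2, e3]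
        · exact valid_at_om e2
        · exact valid_at_om e3
      · exact valid_above hv (fun l hl => erest l (by omega) (by omega)) i hip4 hi
  exact ⟨x, hv, hvx, p, hpre,
    Or.inr (Or.inl ⟨hn, h0, h1, h2, h3, e1, e2, e3, fun i n1 n2 n3 => erest i n1 n3⟩)⟩

theorem match_bx {n : ℕ} {v : Word} {p : ℕ} (hv : Valid3 n v) (hpre : Prefix3 v p)
    (hn : p + 3 < n) (h0 : v p = zm) (h1 : isZ (v (p + 1))) (h2 : v (p + 2) = om)
    (h3 : v (p + 3) = om) : ∃ z, MM3 n z v := by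
  set z : Word := fun i => if i = p + 1 then z1 else if i = p + 3 then v (p + 1)
    else v i with hzdef
  have e1 : z (p + 1) = z1 := by simp [hzdef]
  have e3 : z (p + 3) = v (p + 1) := by simp [hzdef]
  have erest : ∀ i, i ≠ p + 1 → i ≠ p + 3 → z i = v i := by
    intro i n1 n2; simp only [hzdef]; rw [if_neg n1, if_neg n2]
  have e0 : z p = zm := by rw [erest p (by omega) (by omega)]; exact h0
  have e2 : z (p + 2) = om := by rw [erest (p + 2) (by omega) (by omega)]; exact h2
  have hvz : Valid3 n z := by
    rw [valid3_def]
    refine ⟨fun i hi => by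
      rw [erest i (by omega) (by omega)]; exact hv.1 i hi, fun i hi => ?_⟩
    rcases lt_trichotomy i p with hip | hip | hip
    · exact valid_below (prefix3_congr
        (fun l hl => (erest l (by omega) (by omega)).symm) hpre)
        (by rw [e0]; exact isZ_zm) (by omega) i hip
    · subst hip
      refine valid_at_zm e0 ?_
      intro j a1 a2 a3 a4
      have hj : j = i + 1 := by
        by_contra hne
        exact absurd (a4 (i + 1) (by omega) (by omega)) (by rw [e1]; exact isZ_z1)
      rw [hj, show i + 1 - i - 1 = 0 by omega]
      decide
    · rcases Nat.lt_or_ge i (p + 4) with hip4 | hip4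
      · rcases (by omega : i = p + 1 ∨ i = p + 2 ∨ i = p + 3) with h | h | h <;> subst h
        · exact valid_at_lab (Or.inr e1) (p + 3) (by omega) hn (by rw [e3]; exact h1)
            (fun l l1 l2 => by rw [(by omega : l = p + 2)]; exact e2)
            (by rw [show p + 3 - (p + 1) - 1 = 1 by omega]; exact ⟨0, rfl⟩)
        · exact valid_at_om e2
        · refine cond_transport (u := z) (v := v) (s := p + 3) (t := p + 1) (m := p + 3)
            (by omega) (by omega) (by omega) hn e3 h1 (fun l l1 l2 => by omega) ?_
            (fun l hl => erest l (by omega) (by omega)) (hv.2 (p + 1) (by omega))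
          intro l l1 l2
          rcases (by omega : l = p + 2 ∨ l = p + 3) with h | h <;> rw [h]
          exacts [h2, h3]
      · exact valid_above hv (fun l hl => erest l (by omega) (by omega)) i hip4 hi
  exact ⟨z, hvz, hv, p,
    prefix3_congr (fun l hl => (erest l (by omega) (by omega)).symm) hpre,
    Or.inr (Or.inl ⟨hn, e0, e1, e2, by rw [e3]; exact h1, e3.symm, h2, h3,
      fun i n1 n2 n3 => (erest i n1 n3).symm⟩)⟩

theorem match_cz {n : ℕ} {v : Word} {p : ℕ} (hv : Valid3 n v) (hpre : Prefix3 v p)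
    (hn : p + 2 < n) (h0 : v p = zm) (h1 : v (p + 1) = zm) (h2 : isZ (v (p + 2))) :
    ∃ x, MM3 n v x := by
  set x : Word := fun i => if i = p then zx else if i = p + 1 then om else v i with hxdef
  have e0 : x p = zx := by simp [hxdef]
  have e1 : x (p + 1) = om := by simp [hxdef]
  have erest : ∀ i, i ≠ p → i ≠ p + 1 → x i = v i := by
    intro i n1 n2; simp only [hxdef]; rw [if_neg n1, if_neg n2]
  have hvx : Valid3 n x := by
    rw [valid3_def]
    refine ⟨fun i hi => by
      rw [erest i (by omega) (by omega)]; exact hv.1 i hi, fun i hi => ?_⟩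
    rcases lt_trichotomy i p with hip | hip | hip
    · exact valid_below (prefix3_congr
        (fun l hl => (erest l (by omega) (by omega)).symm) hpre)
        (by rw [e0]; exact isZ_zx) (by omega) i hip
    · subst hip
      exact valid_at_lab (Or.inl e0) (i + 2) (by omega) hn
        (by rw [erest (i + 2) (by omega) (by omega)]; exact h2)
        (fun l l1 l2 => by rw [(by omega : l = i + 1)]; exact e1)
        (by rw [show i + 2 - i - 1 = 1 by omega]; exact ⟨0, rfl⟩)
    · rcases Nat.lt_or_ge i (p + 2) with hip2 | hip2
      · rw [(by omega : i = p + 1)]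
        exact valid_at_om e1
      · exact valid_above hv (fun l hl => erest l (by omega) (by omega)) i hip2 hi
  exact ⟨x, hv, hvx, p, hpre, Or.inr (Or.inr ⟨hn, h0, h1, h2, e0, e1, erest⟩)⟩

theorem match_cx {n : ℕ} {v : Word} {p : ℕ} (hv : Valid3 n v) (hpre : Prefix3 v p)
    (hn : p + 2 < n) (h0 : v p = zx) (h1 : v (p + 1) = om) (h2 : isZ (v (p + 2))) :
    ∃ z, MM3 n z v := by
  set z : Word := fun i => if i = p then zm else if i = p + 1 then zm else v i with hzdef
  have e0 : z p = zm := by simp [hzdef]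
  have e1 : z (p + 1) = zm := by simp [hzdef]
  have erest : ∀ i, i ≠ p → i ≠ p + 1 → z i = v i := by
    intro i n1 n2; simp only [hzdef]; rw [if_neg n1, if_neg n2]
  have e2 : isZ (z (p + 2)) := by rw [erest (p + 2) (by omega) (by omega)]; exact h2
  have hvz : Valid3 n z := by
    rw [valid3_def]
    refine ⟨fun i hi => by
      rw [erest i (by omega) (by omega)]; exact hv.1 i hi, fun i hi => ?_⟩
    rcases lt_trichotomy i p with hip | hip | hip
    · exact valid_below (prefix3_congr
        (fun l hl => (erest l (by omega) (by omega)).symm) hpre)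
        (by rw [e0]; exact isZ_zm) (by omega) i hip
    · subst hip
      refine valid_at_zm e0 ?_
      intro j a1 a2 a3 a4
      have hj : j = i + 1 := by
        by_contra hne
        exact absurd (a4 (i + 1) (by omega) (by omega)) (by rw [e1]; exact isZ_zm)
      rw [hj, show i + 1 - i - 1 = 0 by omega]
      decide
    · rcases Nat.lt_or_ge i (p + 2) with hip2 | hip2
      · rw [(by omega : i = p + 1)]
        refine valid_at_zm e1 ?_
        intro j a1 a2 a3 a4
        have hj : j = p + 2 := by
          by_contra hne
          exact absurd (a4 (p + 2) (by omega) (by omega)) e2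
        rw [hj, show p + 2 - (p + 1) - 1 = 0 by omega]
        decide
      · exact valid_above hv (fun l hl => erest l (by omega) (by omega)) i hip2 hi
  exact ⟨z, hvz, hv, p,
    prefix3_congr (fun l hl => (erest l (by omega) (by omega)).symm) hpre,
    Or.inr (Or.inr ⟨hn, e0, e1, e2, h0, h1, fun i n1 n2 => (erest i n1 n2).symm⟩)⟩

/-! ### Structure of critical cells -/

theorem key {n : ℕ} {v : Word} (h : Critical3 n v) :
    ∃ a b t, n = a + 3 * b + t ∧ (∀ i < a, v i = om) ∧
      (∀ s < b, v (a + 3 * s) = zm ∧ v (a + 3 * s + 1) = zx ∧ v (a + 3 * s + 2) = om) ∧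
      ((t = 0 ∧ b = 0) ∨
       (t = 1 ∧ v (a + 3 * b) = zm) ∨
       (t = 2 ∧ v (a + 3 * b) = zm ∧ v (a + 3 * b + 1) = om) ∨
       (t = 2 ∧ v (a + 3 * b) = zm ∧ v (a + 3 * b + 1) = zm) ∨
       (t = 3 ∧ v (a + 3 * b) = zm ∧ v (a + 3 * b + 1) = zm ∧ v (a + 3 * b + 2) = om)) := by
  classical
  obtain ⟨hv, hnz, hnx⟩ := h
  by_cases hall : ∀ i < n, v i = om
  · exact ⟨n, 0, 0, by omega, fun i hi => hall i hi, fun s hs => absurd hs (by omega),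
      Or.inl ⟨rfl, rfl⟩⟩
  push_neg at hall
  obtain ⟨i0, hi0n, hi0⟩ := hall
  have hex : ∃ i, i < n ∧ v i ≠ om := ⟨i0, hi0n, hi0⟩
  set a := Nat.find hex with ha
  have haspec : a < n ∧ v a ≠ om := Nat.find_spec hex
  have hamin : ∀ i < a, v i = om := by
    intro i hi
    by_contra hne
    exact (Nat.find_min hex hi) ⟨by omega, hne⟩
  set P : ℕ → Prop := fun m =>
    ∀ s < m, v (a + 3 * s) = zm ∧ v (a + 3 * s + 1) = zx ∧ v (a + 3 * s + 2) = om with hPdef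
  have hP0 : P 0 := fun s hs => absurd hs (by omega)
  have hexB : ∃ m, ¬ P m := by
    refine ⟨n + 1, fun hPm => ?_⟩
    have h1 := (hPm n (by omega)).2.1
    have h2 := hv.1 (a + 3 * n + 1) (by omega)
    rw [h1] at h2
    exact absurd h2 (by decide)
  set m0 := Nat.find hexB with hm0
  have hm0pos : 0 < m0 := by
    rcases Nat.eq_zero_or_pos m0 with h | h
    · exfalso
      have hs := Nat.find_spec hexB
      rw [← hm0, h] at hs
      exact hs hP0
    · exact h
  set b := m0 - 1 with hbdef
  have hPb : P b := by
    by_contra hh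
    exact (Nat.find_min hexB (show b < Nat.find hexB by rw [← hm0]; omega)) hh
  have hPb1 : ¬ P (b + 1) := by
    rw [(by omega : b + 1 = m0), hm0]
    exact Nat.find_spec hexB
  set p := a + 3 * b with hp
  have hpre : Prefix3 v p := ⟨a, b, hp, hamin, hPb⟩
  have hpn : p < n := by
    rcases Nat.eq_zero_or_pos b with h0 | h0
    · have : p = a := by omega
      rw [this]; exact haspec.1
    · have hzx : v (a + 3 * (b - 1) + 1) = zx := (hPb (b - 1) (by omega)).2.1
      have hidx : a + 3 * (b - 1) + 1 < n := by
        by_contra hh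
        have h2 := hv.1 (a + 3 * (b - 1) + 1) (by omega)
        rw [hzx] at h2
        exact absurd h2 (by decide)
      obtain ⟨-, j, a1, a2, a3, a4, a5⟩ := (hv.2 _ hidx).mp (Or.inl hzx)
      have hjp : p ≤ j := by
        by_contra hh
        have hje : j = a + 3 * (b - 1) + 2 := by omega
        rw [hje] at a3
        exact a3 ((hPb (b - 1) (by omega)).2.2)
      omega
  have hq : ∃ q, p ≤ q ∧ q < n ∧ isZ (v q) ∧ (∀ i, p ≤ i → i < q → v i = om) ∧
      (0 < b → (q - p) % 2 = 0) := by
    rcases Nat.eq_zero_or_pos b with h0 | h0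
    · exact ⟨a, by omega, haspec.1, haspec.2, fun i h1 h2 => by omega, fun hb => by omega⟩
    · have hzx : v (a + 3 * (b - 1) + 1) = zx := (hPb (b - 1) (by omega)).2.1
      have hidx : a + 3 * (b - 1) + 1 < n := by
        by_contra hh
        have h2 := hv.1 (a + 3 * (b - 1) + 1) (by omega)
        rw [hzx] at h2
        exact absurd h2 (by decide)
      obtain ⟨-, j, a1, a2, a3, a4, a5⟩ := (hv.2 _ hidx).mp (Or.inl hzx)
      have hjp : p ≤ j := by
        by_contra hh
        have hje : j = a + 3 * (b - 1) + 2 := by omega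
        rw [hje] at a3
        exact a3 ((hPb (b - 1) (by omega)).2.2)
      refine ⟨j, hjp, a2, a3, fun i h1 h2 => a4 i (by omega) h2, fun _ => ?_⟩
      rw [Nat.odd_iff] at a5
      omega
  obtain ⟨q, hq1, hq2, hq3, hq4, hq5⟩ := hq
  have hqp : q = p := by
    by_contra hne
    have hbpos : 0 < b := by
      rcases Nat.eq_zero_or_pos b with h0 | h0
      · exfalso
        have hpom := hq4 p (le_refl p) (by omega)
        have hpa : p = a := by omega
        rw [hpa] at hpom
        exact haspec.2 hpom
      · exact h0
    have hpre3 : Prefix3 v (a + 3 * (b - 1)) :=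
      ⟨a, b - 1, rfl, hamin, fun s hs => hPb s (by omega)⟩
    have hblk := hPb (b - 1) (by omega)
    obtain ⟨z, hz⟩ := match_bx hv hpre3 (by omega) hblk.1
      (by rw [hblk.2.1]; exact isZ_zx) hblk.2.2
      (by rw [show a + 3 * (b - 1) + 3 = p by omega]
          exact hq4 p (le_refl p) (by omega))
    exact absurd hz (hnx z)
  rw [hqp] at hq3
  have hmaxb : ¬ (v p = zm ∧ v (p + 1) = zx ∧ v (p + 2) = om) := by
    intro hB
    refine hPb1 (fun s hs => ?_)
    rcases Nat.lt_or_ge s b with h | h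
    · exact hPb s h
    · have hsb : s = b := by omega
      rw [hsb, ← hp]
      exact hB
  cases hvp : v p with
  | om => exact absurd hvp hq3
  | z1 =>
    obtain ⟨-, j, a1, a2, a3, a4, a5⟩ := (hv.2 p hpn).mp (Or.inr hvp)
    rcases (by rw [Nat.odd_iff] at a5; omega : j = p + 2 ∨ p + 4 ≤ j) with hj | hj
    · subst hj
      obtain ⟨x, hx⟩ := match_az hv hpre (by omega) hvp (a4 (p + 1) (by omega) (by omega)) a3
      exact absurd hx (hnz x)
    · obtain ⟨z, hz⟩ := match_ax hv hpre (by omega) (by rw [hvp]; exact isZ_z1)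
        (a4 (p + 1) (by omega) (by omega)) (a4 (p + 2) (by omega) (by omega))
      exact absurd hz (hnx z)
  | zx =>
    obtain ⟨-, j, a1, a2, a3, a4, a5⟩ := (hv.2 p hpn).mp (Or.inl hvp)
    rcases (by rw [Nat.odd_iff] at a5; omega : j = p + 2 ∨ p + 4 ≤ j) with hj | hj
    · subst hj
      obtain ⟨z, hz⟩ := match_cx hv hpre (by omega) hvp (a4 (p + 1) (by omega) (by omega)) a3
      exact absurd hz (hnx z)
    · obtain ⟨z, hz⟩ := match_ax hv hpre (by omega) (by rw [hvp]; exact isZ_zx)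
        (a4 (p + 1) (by omega) (by omega)) (a4 (p + 2) (by omega) (by omega))
      exact absurd hz (hnx z)
  | zm =>
    rcases find_next (n := n) v p with hafter | ⟨j, b1, b2, b3, b4⟩
    · have hm : n ≤ p + 2 := by
        by_contra hh
        obtain ⟨z, hz⟩ := match_ax hv hpre (by omega) hq3
          (hafter (p + 1) (by omega) (by omega)) (hafter (p + 2) (by omega) (by omega))
        exact absurd hz (hnx z)
      refine ⟨a, b, n - p, by omega, hamin, hPb, ?_⟩
      rw [← hp]
      rcases (by omega : n = p + 1 ∨ n = p + 2) with h | h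
      · exact Or.inr (Or.inl ⟨by omega, hvp⟩)
      · exact Or.inr (Or.inr (Or.inl ⟨by omega, hvp,
          hafter (p + 1) (by omega) (by omega)⟩))
    · have hjodd : (j - p) % 2 = 1 := by
        by_contra hh
        have hodd : Odd (j - p - 1) := by rw [Nat.odd_iff]; omega
        rcases lab_of_odd hv hpn hq3 b1 b2 b3 b4 hodd with h | h <;> rw [hvp] at h <;>
          exact absurd h (by decide)
      rcases (by omega : j = p + 1 ∨ p + 3 ≤ j) with hj | hj
      · subst hj
        cases hvp1 : v (p + 1) with
        | om => exact absurd hvp1 b3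
        | z1 =>
          obtain ⟨-, j', c1, c2, c3, c4, c5⟩ := (hv.2 (p + 1) b2).mp (Or.inr hvp1)
          rcases (by rw [Nat.odd_iff] at c5; omega : j' = p + 3 ∨ p + 5 ≤ j') with hj' | hj'
          · subst hj'
            obtain ⟨x, hx⟩ := match_bz hv hpre (by omega) hvp hvp1
              (c4 (p + 2) (by omega) (by omega)) c3
            exact absurd hx (hnz x)
          · obtain ⟨z, hz⟩ := match_bx hv hpre (by omega) hvp (by rw [hvp1]; exact isZ_z1)
              (c4 (p + 2) (by omega) (by omega)) (c4 (p + 3) (by omega) (by omega))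
            exact absurd hz (hnx z)
        | zx =>
          obtain ⟨-, j', c1, c2, c3, c4, c5⟩ := (hv.2 (p + 1) b2).mp (Or.inl hvp1)
          rcases (by rw [Nat.odd_iff] at c5; omega : j' = p + 3 ∨ p + 5 ≤ j') with hj' | hj'
          · subst hj'
            exact absurd ⟨hvp, hvp1, c4 (p + 2) (by omega) (by omega)⟩ hmaxb
          · obtain ⟨z, hz⟩ := match_bx hv hpre (by omega) hvp (by rw [hvp1]; exact isZ_zx)
              (c4 (p + 2) (by omega) (by omega)) (c4 (p + 3) (by omega) (by omega))
            exact absurd hz (hnx z)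
        | zm =>
          rcases find_next (n := n) v (p + 1) with hafter2 | ⟨j'', d1, d2, d3, d4⟩
          · have hm : n ≤ p + 3 := by
              by_contra hh
              obtain ⟨z, hz⟩ := match_bx hv hpre (by omega) hvp
                (by rw [hvp1]; exact isZ_zm) (hafter2 (p + 2) (by omega) (by omega))
                (hafter2 (p + 3) (by omega) (by omega))
              exact absurd hz (hnx z)
            refine ⟨a, b, n - p, by omega, hamin, hPb, ?_⟩
            rw [← hp]
            rcases (by omega : n = p + 2 ∨ n = p + 3) with h | h
            · exact Or.inr (Or.inr (Or.inr (Or.inl ⟨by omega, hvp, hvp1⟩)))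
            · exact Or.inr (Or.inr (Or.inr (Or.inr ⟨by omega, hvp, hvp1,
                hafter2 (p + 2) (by omega) (by omega)⟩)))
          · have hjev : (j'' - p) % 2 = 0 := by
              by_contra hh
              have hodd : Odd (j'' - (p + 1) - 1) := by rw [Nat.odd_iff]; omega
              rcases lab_of_odd hv b2 b3 d1 d2 d3 d4 hodd with h | h <;> rw [hvp1] at h <;>
                exact absurd h (by decide)
            rcases (by omega : j'' = p + 2 ∨ p + 4 ≤ j'') with hj'' | hj''
            · subst hj''
              obtain ⟨x, hx⟩ := match_cz hv hpre (by omega) hvp hvp1 d3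
              exact absurd hx (hnz x)
            · obtain ⟨z, hz⟩ := match_bx hv hpre (by omega) hvp
                (by rw [hvp1]; exact isZ_zm) (d4 (p + 2) (by omega) (by omega))
                (d4 (p + 3) (by omega) (by omega))
              exact absurd hz (hnx z)
      · obtain ⟨z, hz⟩ := match_ax hv hpre (by omega) hq3
          (b4 (p + 1) (by omega) (by omega)) (b4 (p + 2) (by omega) (by omega))
        exact absurd hz (hnx z)

/-! ### Counting -/

theorem count_prep6 (s : Sym) (w : Word) (n : ℕ) :
    ((Finset.range (n + 6)).filter fun i => prep6 w i = s).card
      = ((Finset.range n).filter fun i => w i = s).card + if om = s then 6 else 0 := by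
  induction n with
  | zero =>
    simp only [Nat.zero_add, Finset.range_zero, Finset.filter_empty, Finset.card_empty]
    by_cases h : om = s
    · rw [if_pos h, Finset.filter_true_of_mem (fun i hi => by
        rw [prep6_lt (Finset.mem_range.mp hi)]; exact h), Finset.card_range]
    · rw [if_neg h, Finset.filter_false_of_mem (fun i hi => by
        rw [prep6_lt (Finset.mem_range.mp hi)]; exact h), Finset.card_empty]
  | succ m ih =>
    rw [show m + 1 + 6 = (m + 6) + 1 by omega, Finset.range_add_one (n := m + 6),
      Finset.range_add_one (n := m), Finset.filter_insert, Finset.filter_insert, prep6_add w m]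
    by_cases h : w m = s
    · rw [if_pos h, if_pos h, Finset.card_insert_of_notMem (by simp),
        Finset.card_insert_of_notMem (by simp), ih]
      omega
    · rw [if_neg h, if_neg h, ih]

theorem hdeg_prep6 (n : ℕ) (w : Word) : hdeg3 (n + 6) (prep6 w) = hdeg3 n w := by
  unfold hdeg3
  rw [count_prep6 om w n, if_pos rfl]
  push_cast
  ring

theorem qsh_prep6 (n : ℕ) (w : Word) : qsh3 (n + 6) (prep6 w) + 6 = qsh3 n w := by
  unfold qsh3
  rw [count_prep6 om w n, count_prep6 z1 w n, count_prep6 zx w n, if_pos rfl,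
    if_neg (by decide), if_neg (by decide)]
  push_cast
  ring

theorem count_om_blocks (v : Word) (a : ℕ) : ∀ b : ℕ,
    (∀ s < b, v (a + 3 * s) = zm ∧ v (a + 3 * s + 1) = zx ∧ v (a + 3 * s + 2) = om) →
    (∀ i < a, v i = om) →
    ((Finset.range (a + 3 * b)).filter fun i => v i = om).card = a + b
  | 0, hblk, hom => by
    rw [show a + 3 * 0 = a by omega,
      Finset.filter_true_of_mem (fun i hi => hom i (Finset.mem_range.mp hi)),
      Finset.card_range]
  | (b + 1), hblk, hom => by
    have ih := count_om_blocks v a b (fun s hs => hblk s (by omega)) hom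
    have hb := hblk b (by omega)
    rw [show a + 3 * (b + 1) = (a + 3 * b + 2) + 1 by omega, Finset.range_add_one,
      Finset.filter_insert, if_pos hb.2.2, Finset.card_insert_of_notMem (by simp),
      show a + 3 * b + 2 = (a + 3 * b + 1) + 1 by omega, Finset.range_add_one,
      Finset.filter_insert, if_neg (by rw [hb.2.1]; decide),
      Finset.range_add_one, Finset.filter_insert, if_neg (by rw [hb.1]; decide), ih]
    omega

theorem crit_ok {k : ℕ} {v : Word} (h : Critical3 (2 * k + 6) v)
    (hd : -(((4 * k) / 3 : ℕ) : ℤ) ≤ hdeg3 (2 * k + 6) v) : Ok v := by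
  obtain ⟨a, b, t, hn, hom, hblk, htail⟩ := key h
  have hcount := count_om_blocks v a b hblk hom
  unfold hdeg3 at hd
  have h6 : 6 ≤ a := by
    rcases htail with ⟨ht, hb⟩ | ⟨ht, h1⟩ | ⟨ht, h1, h2⟩ | ⟨ht, h1, h2⟩ | ⟨ht, h1, h2, h3⟩
    · omega
    · have hc : ((Finset.range (2 * k + 6)).filter fun i => v i = om).card = a + b := by
        rw [show 2 * k + 6 = (a + 3 * b) + 1 by omega, Finset.range_add_one,
          Finset.filter_insert, if_neg (by rw [h1]; decide), hcount]
      rw [hc] at hd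
      omega
    · have hc : ((Finset.range (2 * k + 6)).filter fun i => v i = om).card = a + b + 1 := by
        rw [show 2 * k + 6 = ((a + 3 * b) + 1) + 1 by omega, Finset.range_add_one,
          Finset.filter_insert, if_pos h2, Finset.card_insert_of_notMem (by simp),
          Finset.range_add_one, Finset.filter_insert, if_neg (by rw [h1]; decide), hcount]
      rw [hc] at hd
      omega
    · have hc : ((Finset.range (2 * k + 6)).filter fun i => v i = om).card = a + b := by
        rw [show 2 * k + 6 = ((a + 3 * b) + 1) + 1 by omega, Finset.range_add_one,
          Finset.filter_insert, if_neg (by rw [h2]; decide),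
          Finset.range_add_one, Finset.filter_insert, if_neg (by rw [h1]; decide), hcount]
      rw [hc] at hd
      omega
    · have hc : ((Finset.range (2 * k + 6)).filter fun i => v i = om).card = a + b + 1 := by
        rw [show 2 * k + 6 = (((a + 3 * b) + 2)) + 1 by omega, Finset.range_add_one,
          Finset.filter_insert, if_pos h3, Finset.card_insert_of_notMem (by simp),
          show a + 3 * b + 2 = (a + 3 * b + 1) + 1 by omega, Finset.range_add_one,
          Finset.filter_insert, if_neg (by rw [h2]; decide),
          Finset.range_add_one, Finset.filter_insert, if_neg (by rw [h1]; decide), hcount]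
      rw [hc] at hd
      omega
  intro i hi
  exact hom i (by omega)

/-! ### Criticality transfer -/

theorem crit_prep6 {n : ℕ} {w : Word} : Critical3 n w ↔ Critical3 (n + 6) (prep6 w) := by
  constructor
  · rintro ⟨hv, hz, hx⟩
    refine ⟨valid_prep6 hv, fun X hX => ?_, fun Z hZ => ?_⟩
    · obtain ⟨-, -, h⟩ := mm_ok hX (Or.inl (ok_prep6 w))
      rw [shift6_prep6] at h; exact hz _ h
    · obtain ⟨-, -, h⟩ := mm_ok hZ (Or.inr (ok_prep6 w))
      rw [shift6_prep6] at h; exact hx _ h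
  · rintro ⟨hv, hz, hx⟩
    have hv' : Valid3 n w := by
      have := valid_ok hv (ok_prep6 w); rwa [shift6_prep6] at this
    exact ⟨hv', fun x h => hz _ (mm_prep6 h), fun z h => hx _ (mm_prep6 h)⟩

/-! ### Paths -/

theorem pushPath_aux {n : ℕ} {a b : Word} (h : ¬ MM3 n a b) :
    ¬ MM3 (n + 6) (prep6 a) (prep6 b) := fun hm => h (mm_back hm)

def pushPath {n : ℕ} : ∀ {a b : Word}, GPath3 n a b → GPath3 (n + 6) (prep6 a) (prep6 b)
  | _, _, .nil a => .nil (prep6 a)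
  | _, _, .up e hne p => .up (e3_prep6 e) (pushPath_aux hne) (pushPath p)
  | _, _, .down e p => .down (mm_prep6 e) (pushPath p)

theorem downs3_push {n : ℕ} : ∀ {a b : Word} (p : GPath3 n a b),
    downs3 (pushPath p) = downs3 p
  | _, _, .nil a => rfl
  | _, _, .up e hne p => downs3_push p
  | _, _, .down e p => by simp only [pushPath, downs3, downs3_push p]

theorem pushPath_inj {n : ℕ} : ∀ {a b : Word} (p q : GPath3 n a b),
    pushPath p = pushPath q → p = q := by
  intro a b p
  induction p with
  | nil a =>
    intro q h
    cases q with
    | nil => rfl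
    | up e hne q' => simp only [pushPath] at h; cases h
    | down e q' => simp only [pushPath] at h; cases h
  | up e hne p' ih =>
    intro q h
    cases q with
    | nil => simp only [pushPath] at h; cases h
    | down e2 q' => simp only [pushPath] at h; cases h
    | up e2 hne2 q' =>
      simp only [pushPath] at h
      injection h with h1 h2 h3 h4
      have hb := prep6_inj h2
      subst hb
      rw [ih q' (eq_of_heq h4)]
  | down e p' ih =>
    intro q h
    cases q with
    | nil => simp only [pushPath] at h; cases h
    | up e2 hne2 q' => simp only [pushPath] at h; cases h
    | down e2 q' =>
      simp only [pushPath] at h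
      injection h with h1 h2 h3 h4
      have hb := prep6_inj h2
      subst hb
      rw [ih q' (eq_of_heq h4)]

theorem pushPath_surj_aux {n : ℕ} {A B : Word} (q : GPath3 (n + 6) A B) :
    ∀ {a b : Word}, A = prep6 a → B = prep6 b → ∃ p : GPath3 n a b, HEq (pushPath p) q := by
  induction q with
  | nil A =>
    intro a b ha hb
    have hab : a = b := prep6_inj (ha.symm.trans hb)
    subst hab
    subst ha
    exact ⟨.nil a, HEq.rfl⟩
  | up e hne q' ih =>
    intro a b ha hb
    subst ha
    subst hb
    obtain ⟨okM, -⟩ := e3_ok e (ok_prep6 a)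
    obtain ⟨m, hm⟩ : ∃ m, _ = prep6 m := ⟨_, (prep6_shift6 okM).symm⟩
    subst hm
    obtain ⟨p', hp'⟩ := ih rfl rfl
    refine ⟨.up (e3_back e) (fun hmm => hne (mm_prep6 hmm)) p', ?_⟩
    simp only [pushPath]
    rw [eq_of_heq hp']
  | down e q' ih =>
    intro a b ha hb
    subst ha
    subst hb
    have okM : Ok _ := (mm_ok e (Or.inr (ok_prep6 a))).1
    obtain ⟨m, hm⟩ : ∃ m, _ = prep6 m := ⟨_, (prep6_shift6 okM).symm⟩
    subst hm
    obtain ⟨p', hp'⟩ := ih rfl rfl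
    refine ⟨.down (mm_back e) p', ?_⟩
    simp only [pushPath]
    rw [eq_of_heq hp']

theorem pushPath_surj {n : ℕ} {a b : Word} (q : GPath3 (n + 6) (prep6 a) (prep6 b)) :
    ∃ p : GPath3 n a b, pushPath p = q := by
  obtain ⟨p, hp⟩ := pushPath_surj_aux q rfl rfl
  exact ⟨p, eq_of_heq hp⟩

theorem pushPath_bij {n : ℕ} (a b : Word) :
    Function.Bijective (pushPath (n := n) (a := a) (b := b)) :=
  ⟨fun p q => pushPath_inj p q, pushPath_surj⟩

end Aux

/-! ### Transfer of the Morse differential -/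

section CatAux

open CategoryTheory

universe v' u'

variable {𝒞 : Type u'} [Category.{v'} 𝒞] [Preadditive 𝒞] {n : ℕ}
  {cell cell2 : Word → 𝒞}
  {dv : ∀ a b : Word, (cell a ⟶ cell b)} {dv2 : ∀ a b : Word, (cell2 a ⟶ cell2 b)}
  {gv : ∀ a b : Word, (cell b ⟶ cell a)} {gv2 : ∀ a b : Word, (cell2 b ⟶ cell2 a)}

theorem gv2_eq
    (hg : ∀ z x, MM3 n z x →
      dv z x ≫ gv z x = 𝟙 (cell z) ∧ gv z x ≫ dv z x = 𝟙 (cell x))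
    (hg2 : ∀ z x, MM3 (n + 6) z x →
      dv2 z x ≫ gv2 z x = 𝟙 (cell2 z) ∧ gv2 z x ≫ dv2 z x = 𝟙 (cell2 x))
    (hcell : ∀ w : Word, cell2 (prep6 w) = cell w)
    (hd : ∀ a b, E3 n a b →
      dv2 (prep6 a) (prep6 b) = eqToHom (hcell a) ≫ dv a b ≫ eqToHom (hcell b).symm)
    {z x : Word} (hmm : MM3 n z x) :
    gv2 (prep6 z) (prep6 x) = eqToHom (hcell x) ≫ gv z x ≫ eqToHom (hcell z).symm := by
  have hmm2 := mm_prep6 hmm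
  have hdd := hd z x (mm_e3 hmm)
  have hC : dv2 (prep6 z) (prep6 x) ≫
      (eqToHom (hcell x) ≫ gv z x ≫ eqToHom (hcell z).symm) = 𝟙 (cell2 (prep6 z)) := by
    rw [hdd]
    simp [reassoc_of% (hg z x hmm).1]
  calc gv2 (prep6 z) (prep6 x)
      = gv2 (prep6 z) (prep6 x) ≫ (dv2 (prep6 z) (prep6 x) ≫
          (eqToHom (hcell x) ≫ gv z x ≫ eqToHom (hcell z).symm)) := by
        rw [hC, Category.comp_id]
    _ = (gv2 (prep6 z) (prep6 x) ≫ dv2 (prep6 z) (prep6 x)) ≫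
          (eqToHom (hcell x) ≫ gv z x ≫ eqToHom (hcell z).symm) := by
        rw [Category.assoc]
    _ = eqToHom (hcell x) ≫ gv z x ≫ eqToHom (hcell z).symm := by
        rw [(hg2 _ _ hmm2).2, Category.id_comp]

theorem pathHom_push
    (hg : ∀ z x, MM3 n z x →
      dv z x ≫ gv z x = 𝟙 (cell z) ∧ gv z x ≫ dv z x = 𝟙 (cell x))
    (hg2 : ∀ z x, MM3 (n + 6) z x →
      dv2 z x ≫ gv2 z x = 𝟙 (cell2 z) ∧ gv2 z x ≫ dv2 z x = 𝟙 (cell2 x))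
    (hcell : ∀ w : Word, cell2 (prep6 w) = cell w)
    (hd : ∀ a b, E3 n a b →
      dv2 (prep6 a) (prep6 b) = eqToHom (hcell a) ≫ dv a b ≫ eqToHom (hcell b).symm)
    {a b : Word} (p : GPath3 n a b) :
    pathHom3 cell2 dv2 gv2 (n + 6) (pushPath p)
      = eqToHom (hcell a) ≫ pathHom3 cell dv gv n p ≫ eqToHom (hcell b).symm := by
  induction p with
  | nil a => simp [pushPath, pathHom3]
  | up e hne p' ih =>
    simp only [pushPath, pathHom3]
    rw [ih, hd _ _ e]
    simp
  | down e p' ih =>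
    simp only [pushPath, pathHom3]
    rw [ih, gv2_eq hg hg2 hcell hd e]
    simp

theorem mEntry_push
    (hg : ∀ z x, MM3 n z x →
      dv z x ≫ gv z x = 𝟙 (cell z) ∧ gv z x ≫ dv z x = 𝟙 (cell x))
    (hg2 : ∀ z x, MM3 (n + 6) z x →
      dv2 z x ≫ gv2 z x = 𝟙 (cell2 z) ∧ gv2 z x ≫ dv2 z x = 𝟙 (cell2 x))
    (hcell : ∀ w : Word, cell2 (prep6 w) = cell w)
    (hd : ∀ a b, E3 n a b →
      dv2 (prep6 a) (prep6 b) = eqToHom (hcell a) ≫ dv a b ≫ eqToHom (hcell b).symm)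
    (z x : Word) :
    mEntry3 cell2 dv2 gv2 (n + 6) (prep6 z) (prep6 x)
      = eqToHom (hcell z) ≫ mEntry3 cell dv gv n z x ≫ eqToHom (hcell x).symm := by
  classical
  set φ : (cell z ⟶ cell x) →+ (cell2 (prep6 z) ⟶ cell2 (prep6 x)) :=
    AddMonoidHom.mk' (fun f => eqToHom (hcell z) ≫ f ≫ eqToHom (hcell x).symm)
      (by intro f g; simp [Preadditive.comp_add, Preadditive.add_comp]) with hφ
  have hφinj : Function.Injective φ := by
    intro f g hfg
    simp only [hφ, AddMonoidHom.mk'_apply] at hfg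
    have h2 := congrArg (fun t => eqToHom (hcell z).symm ≫ t ≫ eqToHom (hcell x)) hfg
    simpa using h2
  unfold mEntry3
  have h1 : (∑ᶠ p : GPath3 n z x, φ (((-1 : ℤ) ^ downs3 p) • pathHom3 cell dv gv n p))
      = ∑ᶠ q : GPath3 (n + 6) (prep6 z) (prep6 x),
          ((-1 : ℤ) ^ downs3 q) • pathHom3 cell2 dv2 gv2 (n + 6) q := by
    refine finsum_eq_of_bijective pushPath (pushPath_bij z x) (fun p => ?_)
    rw [downs3_push, pathHom_push hg hg2 hcell hd]
    simp [hφ, Preadditive.comp_zsmul, Preadditive.zsmul_comp]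
  rw [← h1, ← AddMonoidHom.map_finsum_of_injective φ hφinj]
  simp [hφ]

end CatAux

/-! ### The equivalence of critical cells -/

noncomputable def critEquiv (k : ℕ) (t : ℤ) (ht : -(((4 * k) / 3 : ℕ) : ℤ) ≤ t) :
    Crit3T (2 * k) t ≃ Crit3T (2 * k + 6) t where
  toFun c := ⟨prep6 c.1, crit_prep6.mp c.2.1, by rw [hdeg_prep6]; exact c.2.2⟩
  invFun c := by
    refine ⟨shift6 c.1, ?_, ?_⟩
    · have hok : Ok c.1 := crit_ok c.2.1 (by rw [c.2.2]; exact ht)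
      refine crit_prep6.mpr ?_
      rw [prep6_shift6 hok]
      exact c.2.1
    · have hok : Ok c.1 := crit_ok c.2.1 (by rw [c.2.2]; exact ht)
      have h := hdeg_prep6 (2 * k) (shift6 c.1)
      rw [prep6_shift6 hok] at h
      rw [← h]
      exact c.2.2
  left_inv c := Subtype.ext (shift6_prep6 c.1)
  right_inv c := Subtype.ext (prep6_shift6 (crit_ok c.2.1 (by rw [c.2.2]; exact ht)))

theorem critEquiv_apply (k : ℕ) (t : ℤ) (ht : -(((4 * k) / 3 : ℕ) : ℤ) ≤ t)
    (c : Crit3T (2 * k) t) : (critEquiv k t ht c).1 = prep6 c.1 := rfl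

open CategoryTheory

universe v u

theorem stmt15 {𝒞 : Type u} [Category.{v} 𝒞] [Preadditive 𝒞] (k : ℕ)
    (cell cell2 : Word → 𝒞)
    (dv : ∀ a b : Word, (cell a ⟶ cell b)) (dv2 : ∀ a b : Word, (cell2 a ⟶ cell2 b))
    (gv : ∀ a b : Word, (cell b ⟶ cell a)) (gv2 : ∀ a b : Word, (cell2 b ⟶ cell2 a))
    (hsupp : ∀ a b, ¬ E3 (2 * k) a b → dv a b = 0)
    (hsupp2 : ∀ a b, ¬ E3 (2 * k + 6) a b → dv2 a b = 0)
    (hg : ∀ z x, MM3 (2 * k) z x →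
      dv z x ≫ gv z x = 𝟙 (cell z) ∧ gv z x ≫ dv z x = 𝟙 (cell x))
    (hg2 : ∀ z x, MM3 (2 * k + 6) z x →
      dv2 z x ≫ gv2 z x = 𝟙 (cell2 z) ∧ gv2 z x ≫ dv2 z x = 𝟙 (cell2 x))
    -- cells and matrix elements are invariant under prepending a full twist
    (hcell : ∀ w : Word, cell2 (prep6 w) = cell w)
    (hd : ∀ a b, E3 (2 * k) a b →
      dv2 (prep6 a) (prep6 b) = eqToHom (hcell a) ≫ dv a b ≫ eqToHom (hcell b).symm) :
    ∃ (e : ∀ t : ℤ, -(((4 * k) / 3 : ℕ) : ℤ) ≤ t → (Crit3T (2 * k) t ≃ Crit3T (2 * k + 6) t))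
      (ψ : ∀ (t : ℤ) (h : -(((4 * k) / 3 : ℕ) : ℤ) ≤ t) (c : Crit3T (2 * k) t),
        cell c.1 ≅ cell2 ((e t h c).1)),
      (∀ (t : ℤ) (h : -(((4 * k) / 3 : ℕ) : ℤ) ≤ t)
          (c : Crit3T (2 * k) t) (c' : Crit3T (2 * k) (t + 1)),
        mEntry3 cell dv gv (2 * k) c.1 c'.1 ≫ (ψ (t + 1) (by omega) c').hom
          = (ψ t h c).hom ≫
            mEntry3 cell2 dv2 gv2 (2 * k + 6) ((e t h c).1) ((e (t + 1) (by omega) c').1))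
      ∧ ∀ (t : ℤ) (h : -(((4 * k) / 3 : ℕ) : ℤ) ≤ t) (c : Crit3T (2 * k) t),
          qsh3 (2 * k + 6) ((e t h c).1) + 6 = qsh3 (2 * k) c.1 := by
  refine ⟨fun t ht => critEquiv k t ht,
    fun t ht c => eqToIso (hcell c.1).symm, fun t ht c c' => ?_, fun t ht c => ?_⟩
  · show mEntry3 cell dv gv (2 * k) c.1 c'.1 ≫ eqToHom (hcell c'.1).symm
      = eqToHom (hcell c.1).symm ≫
          mEntry3 cell2 dv2 gv2 (2 * k + 6) (prep6 c.1) (prep6 c'.1)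
    rw [mEntry_push hg hg2 hcell hd c.1 c'.1]
    simp
  · exact qsh_prep6 (2 * k) c.1

end Stmt15
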